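/- arXiv:1901.10886 — 13 statements merged into one kernel-verified Lean document; each statement's English description precedes it below -/
import Mathlib

section
/- For all real r with 0 < r ≤ 1 and all real θ, |1 + re^{iθ} + r²e^{2iθ}| / (1 + r + r²) ≤ exp(-(2r/(1+r²))·sin²(θ/2)). -/
set_option maxHeartbeats 1000000
open Real

lemma keyexp (t : ℝ) : 1 - t ≤ Real.exp (-(t + t^2/2 + t^3/3 + t^4/4 + t^5/5)) := by
  have hg : ∀ x : ℝ, HasDerivAt (fun y : ℝ => (1 - y) * Real.exp (y + y^2/2 + y^3/3 + y^4/4 + y^5/5))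
      (-(x^5) * Real.exp (x + x^2/2 + x^3/3 + x^4/4 + x^5/5)) x := by
    intro x
    have hp : HasDerivAt (fun y : ℝ => y + y^2/2 + y^3/3 + y^4/4 + y^5/5)
        (1 + x + x^2 + x^3 + x^4) x := by
      have h := ((((hasDerivAt_id x).add ((hasDerivAt_pow 2 x).div_const 2)).add
        ((hasDerivAt_pow 3 x).div_const 3)).add ((hasDerivAt_pow 4 x).div_const 4)).add
        ((hasDerivAt_pow 5 x).div_const 5)
      refine h.congr_deriv ?_
      norm_num
    have he := hp.exp
    have h1 : HasDerivAt (fun y : ℝ => 1 - y) (-1) x := by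
      exact ((hasDerivAt_const x (1:ℝ)).sub (hasDerivAt_id x)).congr_deriv (by ring)
    have := h1.mul he
    refine this.congr_deriv ?_
    ring
  have key : ∀ x : ℝ, (1 - x) * Real.exp (x + x^2/2 + x^3/3 + x^4/4 + x^5/5) ≤ 1 := by
    intro x
    set g := fun y : ℝ => (1 - y) * Real.exp (y + y^2/2 + y^3/3 + y^4/4 + y^5/5) with hgdef
    have hcont : Continuous g := by fun_prop
    rcases le_total 0 x with hx | hx
    · have hmono : AntitoneOn g (Set.Icc 0 x) := by
        apply antitoneOn_of_deriv_nonpos (convex_Icc 0 x) (hcont.continuousOn)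
        · intro y hy
          exact (hg y).differentiableAt.differentiableWithinAt
        · intro y hy
          rw [(hg y).deriv]
          have : (0:ℝ) ≤ y := by
            simp [interior_Icc] at hy; linarith [hy.1]
          nlinarith [Real.exp_pos (y + y^2/2 + y^3/3 + y^4/4 + y^5/5), pow_nonneg this 5]
      have := hmono (Set.left_mem_Icc.2 hx) (Set.right_mem_Icc.2 hx) hx
      simpa [hgdef] using this
    · have hmono : MonotoneOn g (Set.Icc x 0) := by
        apply monotoneOn_of_deriv_nonneg (convex_Icc x 0) (hcont.continuousOn)
        · intro y hy
          exact (hg y).differentiableAt.differentiableWithinAt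
        · intro y hy
          rw [(hg y).deriv]
          have hy0 : y ≤ 0 := by
            simp [interior_Icc] at hy; linarith [hy.2]
          have : y^5 ≤ 0 := by
            have := pow_nonneg (neg_nonneg.2 hy0) 5
            nlinarith
          nlinarith [Real.exp_pos (y + y^2/2 + y^3/3 + y^4/4 + y^5/5)]
      have := hmono (Set.left_mem_Icc.2 hx) (Set.right_mem_Icc.2 hx) hx
      simpa [hgdef] using this
  have h := key t
  have hepos := Real.exp_pos (t + t^2/2 + t^3/3 + t^4/4 + t^5/5)
  rw [Real.exp_neg]
  rw [show (Real.exp (t + t^2/2 + t^3/3 + t^4/4 + t^5/5))⁻¹ = 1 / Real.exp (t + t^2/2 + t^3/3 + t^4/4 + t^5/5) by ring]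
  rw [le_div_iff₀ hepos]
  linarith

lemma polyineq (r s : ℝ) (hr0 : 0 < r) (hs0 : 0 ≤ s) (hs1 : s ≤ 1) :
    3*(1+r+r^2)^3 ≤ 3*(3-2*s)*(1+r+r^2)^2*(1+r^2) + 4*r*(1+r+r^2)*(1+r^2)*s*(9-8*s)
      + 6*r^2*(1+r^2)*s*(9-8*s^2) := by
  have hB : 0 ≤ 18+66*s-32*s^2-48*s^3 := by nlinarith [sq_nonneg s, sq_nonneg (1-s), mul_nonneg hs0 (sub_nonneg.2 hs1), mul_nonneg (mul_nonneg hs0 hs0) (sub_nonneg.2 hs1)]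
  have h1 : 0 ≤ 9+24*s-32*s^2 := by nlinarith [mul_nonneg hs0 (sub_nonneg.2 hs1)]
  have hC : 0 ≤ 51+180*s-128*s^2-96*s^3 := by nlinarith [mul_nonneg hs0 (sub_nonneg.2 hs1), mul_nonneg (mul_nonneg hs0 hs0) (sub_nonneg.2 hs1)]
  have p1 : 0 ≤ (18+66*s-32*s^2-48*s^3) * (r - r^2)^2 := mul_nonneg hB (sq_nonneg _)
  have p2 : 0 ≤ r^3 * (51+180*s-128*s^2-96*s^3) := mul_nonneg (by positivity) hC
  have p3 : 0 ≤ (r + r^5) * (9+24*s-32*s^2) := mul_nonneg (by positivity) h1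
  have p4 : 0 ≤ 6*(1+r^6)*(1-s) := by
    have : (0:ℝ) ≤ 1 - s := by linarith
    positivity
  nlinarith [p1, p2, p3, p4]

lemma expsum (r s b tp tm : ℝ) (hr0 : 0 < r) (hr1 : r ≤ 1) (hs0 : 0 ≤ s) (hs1 : s ≤ 1)
    (hb : b^2 = 12*s*(1-s))
    (htp : tp*(1+r+r^2) = r*(2*s+b)) (htm : tm*(1+r+r^2) = r*(2*s-b)) :
    4*r*s/(1+r^2) ≤ (tp + tp^2/2 + tp^3/3 + tp^4/4 + tp^5/5)
      + (tm + tm^2/2 + tm^3/3 + tm^4/4 + tm^5/5) := by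
  have hu : (0:ℝ) < 1+r^2 := by positivity
  have hD : (0:ℝ) < 1+r+r^2 := by positivity
  have hE0 : 0 ≤ 3*(3-2*s)*(1+r+r^2)^2*(1+r^2) + 4*r*(1+r+r^2)*(1+r^2)*s*(9-8*s)
      + 6*r^2*(1+r^2)*s*(9-8*s^2) - 3*(1+r+r^2)^3 := by
    have := polyineq r s hr0 hs0 hs1
    linarith
  have h45 : (0:ℝ) ≤ 45-60*s+16*s^2 := by nlinarith [mul_nonneg hs0 (sub_nonneg.2 hs1)]
  have hEx0 : 0 ≤ 80*s*r^2*(3*(3-2*s)*(1+r+r^2)^2*(1+r^2) + 4*r*(1+r+r^2)*(1+r^2)*s*(9-8*s)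
            + 6*r^2*(1+r^2)*s*(9-8*s^2) - 3*(1+r+r^2)^3)*(1+r+r^2)
          + 768*(1+r^2)*s^3*r^5*(45-60*s+16*s^2) := by
    have h1 : 0 ≤ 80*s*r^2*(3*(3-2*s)*(1+r+r^2)^2*(1+r^2) + 4*r*(1+r+r^2)*(1+r^2)*s*(9-8*s)
            + 6*r^2*(1+r^2)*s*(9-8*s^2) - 3*(1+r+r^2)^3)*(1+r+r^2) := by
      apply mul_nonneg _ hD.le
      apply mul_nonneg _ hE0
      positivity
    have h2 : 0 ≤ 768*(1+r^2)*s^3*r^5*(45-60*s+16*s^2) := by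
      apply mul_nonneg _ h45
      positivity
    linarith
  have hp : 60*(1+r+r^2)^5*(tp + tp^2/2 + tp^3/3 + tp^4/4 + tp^5/5)
      = 60*(r*(2*s+b))*(1+r+r^2)^4 + 30*(r*(2*s+b))^2*(1+r+r^2)^3
        + 20*(r*(2*s+b))^3*(1+r+r^2)^2 + 15*(r*(2*s+b))^4*(1+r+r^2) + 12*(r*(2*s+b))^5 := by
    linear_combination (60*(1+r+r^2)^4 + 30*(1+r+r^2)^3*(tp*(1+r+r^2) + r*(2*s+b))
      + 20*(1+r+r^2)^2*((tp*(1+r+r^2))^2 + (tp*(1+r+r^2))*(r*(2*s+b)) + (r*(2*s+b))^2)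
      + 15*(1+r+r^2)*((tp*(1+r+r^2))^3 + (tp*(1+r+r^2))^2*(r*(2*s+b))
          + (tp*(1+r+r^2))*(r*(2*s+b))^2 + (r*(2*s+b))^3)
      + 12*((tp*(1+r+r^2))^4 + (tp*(1+r+r^2))^3*(r*(2*s+b))
          + (tp*(1+r+r^2))^2*(r*(2*s+b))^2 + (tp*(1+r+r^2))*(r*(2*s+b))^3
          + (r*(2*s+b))^4)) * htp
  have hm : 60*(1+r+r^2)^5*(tm + tm^2/2 + tm^3/3 + tm^4/4 + tm^5/5)
      = 60*(r*(2*s-b))*(1+r+r^2)^4 + 30*(r*(2*s-b))^2*(1+r+r^2)^3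
        + 20*(r*(2*s-b))^3*(1+r+r^2)^2 + 15*(r*(2*s-b))^4*(1+r+r^2) + 12*(r*(2*s-b))^5 := by
    linear_combination (60*(1+r+r^2)^4 + 30*(1+r+r^2)^3*(tm*(1+r+r^2) + r*(2*s-b))
      + 20*(1+r+r^2)^2*((tm*(1+r+r^2))^2 + (tm*(1+r+r^2))*(r*(2*s-b)) + (r*(2*s-b))^2)
      + 15*(1+r+r^2)*((tm*(1+r+r^2))^3 + (tm*(1+r+r^2))^2*(r*(2*s-b))
          + (tm*(1+r+r^2))*(r*(2*s-b))^2 + (r*(2*s-b))^3)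
      + 12*((tm*(1+r+r^2))^4 + (tm*(1+r+r^2))^3*(r*(2*s-b))
          + (tm*(1+r+r^2))^2*(r*(2*s-b))^2 + (tm*(1+r+r^2))*(r*(2*s-b))^3
          + (r*(2*s-b))^4)) * htm
  have hS : (1+r^2) * (60*(1+r+r^2)^5) * ((tp + tp^2/2 + tp^3/3 + tp^4/4 + tp^5/5)
      + (tm + tm^2/2 + tm^3/3 + tm^4/4 + tm^5/5))
      = 240*r*s*(1+r+r^2)^5
        + (80*s*r^2*(3*(3-2*s)*(1+r+r^2)^2*(1+r^2) + 4*r*(1+r+r^2)*(1+r^2)*s*(9-8*s)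
            + 6*r^2*(1+r^2)*s*(9-8*s^2) - 3*(1+r+r^2)^3)*(1+r+r^2)
          + 768*(1+r^2)*s^3*r^5*(45-60*s+16*s^2)) := by
    linear_combination (1+r^2)*hp + (1+r^2)*hm + (60*r^2 + 180*r^3 + 240*r^3*s + 420*r^4
      + 30*r^4*b^2 + 840*r^4*s + 360*r^4*s^2 + 600*r^5 + 30*r^5*b^2 + 1320*r^5*s
      + 240*r^5*s*b^2 + 3240*r^5*s^2 - 960*r^5*s^3 + 720*r^6 + 60*r^6*b^2 + 1680*r^6*s
      + 720*r^6*s^2 + 600*r^7 + 30*r^7*b^2 + 1320*r^7*s + 240*r^7*s*b^2 + 3240*r^7*s^2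
      - 960*r^7*s^3 + 420*r^8 + 30*r^8*b^2 + 840*r^8*s + 360*r^8*s^2 + 180*r^9
      + 240*r^9*s + 60*r^10) * hb
  rw [div_le_iff₀ hu]
  have h60 : (0:ℝ) < 60*(1+r+r^2)^5 := by positivity
  have h2 : (4*r*s) * (60*(1+r+r^2)^5)
      ≤ (((tp + tp^2/2 + tp^3/3 + tp^4/4 + tp^5/5)
        + (tm + tm^2/2 + tm^3/3 + tm^4/4 + tm^5/5))*(1+r^2)) * (60*(1+r+r^2)^5) := by
    linarith [hS, hEx0]
  exact le_of_mul_le_mul_right h2 h60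

open Complex Real

theorem stmt0 (r θ : ℝ) (hr0 : 0 < r) (hr1 : r ≤ 1) :
    ‖1 + (r : ℂ) * Complex.exp (θ * Complex.I)
        + (r : ℂ) ^ 2 * Complex.exp (2 * θ * Complex.I)‖ / (1 + r + r ^ 2)
      ≤ Real.exp (-(2 * r / (1 + r ^ 2)) * Real.sin (θ / 2) ^ 2) := by
  have hD : (0:ℝ) < 1 + r + r ^ 2 := by positivity
  have hu : (0:ℝ) < 1 + r ^ 2 := by positivity
  set s : ℝ := Real.sin (θ/2) ^ 2 with hsdef
  set σ : ℝ := Real.sin θ with hσdef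
  have hs0 : 0 ≤ s := sq_nonneg _
  have hs1 : s ≤ 1 := Real.sin_sq_le_one _
  have hpyth := Real.sin_sq_add_cos_sq (θ/2)
  have hc : Real.cos θ = 1 - 2*s := by
    have key := Real.cos_two_mul (θ/2)
    rw [show 2*(θ/2) = θ by ring] at key
    rw [hsdef]
    linarith [key, hpyth]
  have hσ2 : σ^2 = 4*s*(1-s) := by
    have key := Real.sin_two_mul (θ/2)
    rw [show 2*(θ/2) = θ by ring] at key
    rw [hσdef, hsdef, key]
    linear_combination (4*Real.sin (θ/2)^2) * hpyth
  set w : ℝ := Real.sqrt 3 with hwdef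
  have hw : w^2 = 3 := Real.sq_sqrt (by norm_num)
  have hb : (w*σ)^2 = 12*s*(1-s) := by
    rw [mul_pow, hw, hσ2]; ring
  set tp : ℝ := r*(2*s + w*σ)/(1+r+r^2) with htpdef
  set tm : ℝ := r*(2*s - w*σ)/(1+r+r^2) with htmdef
  have htp : tp*(1+r+r^2) = r*(2*s + w*σ) := by
    rw [htpdef]; field_simp
  have htm : tm*(1+r+r^2) = r*(2*s - w*σ) := by
    rw [htmdef]; field_simp
  have hpy : (1-2*s)^2 + σ^2 = 1 := by linear_combination hσ2
  have hb1 : ((1-2*s) - w*σ)^2 ≤ 4 := by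
    nlinarith [sq_nonneg (w*(1-2*s)+σ), hw, hpy, sq_nonneg σ, sq_nonneg (1-2*s)]
  have hb2 : ((1-2*s) + w*σ)^2 ≤ 4 := by
    nlinarith [sq_nonneg (w*(1-2*s)-σ), hw, hpy, sq_nonneg σ, sq_nonneg (1-2*s)]
  have hx1 : -2 ≤ (1-2*s) - w*σ := by nlinarith [hb1]
  have hx2 : -2 ≤ (1-2*s) + w*σ := by nlinarith [hb2]
  have h1tp : 0 ≤ 1 - tp := by
    rw [htpdef, sub_nonneg, div_le_one hD]
    nlinarith [hx1, hr0.le, sq_nonneg (1-r)]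
  have h1tm : 0 ≤ 1 - tm := by
    rw [htmdef, sub_nonneg, div_le_one hD]
    nlinarith [hx2, hr0.le, sq_nonneg (1-r)]
  -- re and im of Z
  set aa : ℝ := 1 + r*(1-2*s) + r^2*(2*(1-2*s)^2-1) with haadef
  set bb : ℝ := r*σ + r^2*(2*σ*(1-2*s)) with hbbdef
  have hexp1 : Complex.exp (θ * Complex.I)
      = ((Real.cos θ : ℝ) : ℂ) + ((σ : ℝ) : ℂ) * Complex.I := by
    rw [Complex.exp_mul_I, hσdef, Complex.ofReal_cos, Complex.ofReal_sin]
  have hexp2 : Complex.exp (2 * θ * Complex.I)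
      = ((Real.cos (2*θ) : ℝ) : ℂ) + ((Real.sin (2*θ) : ℝ) : ℂ) * Complex.I := by
    have : (2 * (θ:ℂ)) = ((2*θ : ℝ) : ℂ) := by push_cast; ring
    rw [show (2 * (θ:ℂ) * Complex.I) = ((2*θ : ℝ) : ℂ) * Complex.I by push_cast; ring,
      Complex.exp_mul_I, Complex.ofReal_cos, Complex.ofReal_sin]
  have hZ : (1 + (r : ℂ) * Complex.exp (θ * Complex.I)
        + (r : ℂ) ^ 2 * Complex.exp (2 * θ * Complex.I))
      = ((aa : ℝ) : ℂ) + ((bb : ℝ) : ℂ) * Complex.I := by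
    rw [hexp1, hexp2, Real.cos_two_mul, Real.sin_two_mul, hc, haadef, hbbdef, hσdef]
    push_cast
    ring
  have hA2 : ‖1 + (r : ℂ) * Complex.exp (θ * Complex.I)
        + (r : ℂ) ^ 2 * Complex.exp (2 * θ * Complex.I)‖ ^ 2 = aa^2 + bb^2 := by
    rw [Complex.sq_norm, hZ, Complex.normSq_add_mul_I]
  have hprod : aa^2 + bb^2 = (1+r+r^2)^2 * ((1-tp)*(1-tm)) := by
    rw [haadef, hbbdef]
    linear_combination ((1+r+r^2) - tm*(1+r+r^2))*htp + ((1+r+r^2) - r*(2*s+w*σ))*htm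
      + (4*r^2 + 4*r^3 - 8*r^3*s + 4*r^4 - 16*r^4*s + 16*r^4*s^2)*hσ2 + (r^2*σ^2)*hw
  have hk1 := keyexp tp
  have hk2 := keyexp tm
  have hmul : (1-tp)*(1-tm)
      ≤ Real.exp (-(tp + tp^2/2 + tp^3/3 + tp^4/4 + tp^5/5))
        * Real.exp (-(tm + tm^2/2 + tm^3/3 + tm^4/4 + tm^5/5)) :=
    mul_le_mul hk1 hk2 h1tm (Real.exp_pos _).le
  rw [← Real.exp_add] at hmul
  have hsum := expsum r s (w*σ) tp tm hr0 hr1 hs0 hs1 hb htp htm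
  have hmul2 : (1-tp)*(1-tm) ≤ Real.exp (-(4*r*s/(1+r^2))) := by
    refine hmul.trans (Real.exp_le_exp.2 ?_)
    linarith
  rw [div_le_iff₀ hD]
  have hR0 : 0 ≤ Real.exp (-(2 * r / (1 + r ^ 2)) * s) * (1 + r + r ^ 2) := by positivity
  have h2 : ‖1 + (r : ℂ) * Complex.exp (θ * Complex.I)
        + (r : ℂ) ^ 2 * Complex.exp (2 * θ * Complex.I)‖ ^ 2
      ≤ (Real.exp (-(2 * r / (1 + r ^ 2)) * s) * (1 + r + r ^ 2)) ^ 2 := by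
    rw [hA2, hprod]
    have : (Real.exp (-(2 * r / (1 + r ^ 2)) * s) * (1 + r + r ^ 2)) ^ 2
        = (1+r+r^2)^2 * Real.exp (-(4*r*s/(1+r^2))) := by
      rw [mul_pow, sq (Real.exp _), ← Real.exp_add]
      rw [show -(2 * r / (1 + r ^ 2)) * s + -(2 * r / (1 + r ^ 2)) * s = -(4*r*s/(1+r^2)) by ring]
      ring
    rw [this]
    exact mul_le_mul_of_nonneg_left hmul2 (by positivity)
  calc ‖1 + (r : ℂ) * Complex.exp (θ * Complex.I)
        + (r : ℂ) ^ 2 * Complex.exp (2 * θ * Complex.I)‖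
      = Real.sqrt (‖1 + (r : ℂ) * Complex.exp (θ * Complex.I)
        + (r : ℂ) ^ 2 * Complex.exp (2 * θ * Complex.I)‖ ^ 2) :=
        (Real.sqrt_sq (norm_nonneg _)).symm
    _ ≤ Real.sqrt ((Real.exp (-(2 * r / (1 + r ^ 2)) * s) * (1 + r + r ^ 2)) ^ 2) :=
        Real.sqrt_le_sqrt h2
    _ = Real.exp (-(2 * r / (1 + r ^ 2)) * s) * (1 + r + r ^ 2) := Real.sqrt_sq hR0
end

section
/- Let 0 < a ≤ b and 0 < c ≤ π/b be real numbers. Then for all complex z with (Im z)² ≤ (Re z)² + c², one has |sinh(az)/sinh(bz)| ≤ sin(ac)/sin(bc). -/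
open Complex Real Filter Finset

lemma sinh_euler (w : ℂ) :
    Filter.Tendsto (fun n : ℕ => w * ∏ j ∈ Finset.range n,
      ((1 : ℂ) + w ^ 2 / ((Real.pi : ℂ) ^ 2 * ((j : ℂ) + 1) ^ 2)))
      Filter.atTop (nhds (Complex.sinh w)) := by
  have hπ : (Real.pi : ℂ) ≠ 0 := by exact_mod_cast Real.pi_ne_zero
  have h := Complex.tendsto_euler_sin_prod (w * Complex.I / Real.pi)
  have hseq : ∀ n : ℕ, (Real.pi : ℂ) * (w * Complex.I / Real.pi) *
      ∏ j ∈ Finset.range n, ((1:ℂ) - (w * Complex.I / Real.pi)^2 / ((j:ℂ)+1)^2)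
      = (w * ∏ j ∈ Finset.range n,
          ((1:ℂ) + w ^ 2 / ((Real.pi : ℂ) ^ 2 * ((j : ℂ) + 1) ^ 2))) * Complex.I := by
    intro n
    have hfac : ∀ j : ℕ, (1:ℂ) - (w * Complex.I / Real.pi)^2 / ((j:ℂ)+1)^2
        = (1:ℂ) + w ^ 2 / ((Real.pi : ℂ) ^ 2 * ((j : ℂ) + 1) ^ 2) := by
      intro j
      have hj : ((j:ℂ)+1) ≠ 0 := by
        have : ((j:ℕ)+1 : ℂ) ≠ 0 := Nat.cast_add_one_ne_zero j
        simpa using this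
      field_simp
      ring_nf
      rw [Complex.I_sq]
      ring
    rw [Finset.prod_congr rfl (fun j _ => hfac j)]
    field_simp
  have h2 : Filter.Tendsto (fun n : ℕ => (w * ∏ j ∈ Finset.range n,
      ((1:ℂ) + w ^ 2 / ((Real.pi : ℂ) ^ 2 * ((j : ℂ) + 1) ^ 2))) * Complex.I)
      Filter.atTop (nhds (Complex.sin (Real.pi * (w * Complex.I / Real.pi)))) := by
    exact h.congr hseq
  have hsin : Complex.sin ((Real.pi : ℂ) * (w * Complex.I / Real.pi)) = Complex.sinh w * Complex.I := by
    rw [mul_div_assoc']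
    rw [mul_comm (Real.pi : ℂ) (w * Complex.I), mul_div_assoc, div_self hπ, mul_one]
    exact Complex.sin_mul_I w
  rw [hsin] at h2
  have h3 := h2.mul_const (Complex.I⁻¹)
  have hII : ∀ u : ℂ, u * Complex.I * Complex.I⁻¹ = u := by
    intro u
    rw [mul_assoc, mul_inv_cancel₀ Complex.I_ne_zero, mul_one]
  simp only [hII] at h3
  exact h3

lemma sin_euler (x : ℝ) :
    Filter.Tendsto (fun n : ℕ => x * ∏ j ∈ Finset.range n,
      ((1 : ℝ) - x ^ 2 / (Real.pi ^ 2 * ((j : ℝ) + 1) ^ 2)))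
      Filter.atTop (nhds (Real.sin x)) := by
  have hπ : Real.pi ≠ 0 := Real.pi_ne_zero
  have h := Real.tendsto_euler_sin_prod (x / Real.pi)
  have hseq : ∀ n : ℕ, Real.pi * (x / Real.pi) *
      ∏ j ∈ Finset.range n, ((1:ℝ) - (x / Real.pi)^2 / ((j:ℝ)+1)^2)
      = x * ∏ j ∈ Finset.range n, ((1:ℝ) - x ^ 2 / (Real.pi ^ 2 * ((j : ℝ) + 1) ^ 2)) := by
    intro n
    have hfac : ∀ j : ℕ, (1:ℝ) - (x / Real.pi)^2 / ((j:ℝ)+1)^2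
        = (1:ℝ) - x ^ 2 / (Real.pi ^ 2 * ((j : ℝ) + 1) ^ 2) := by
      intro j
      rw [div_pow, div_div]
    rw [Finset.prod_congr rfl (fun j _ => hfac j), mul_div_assoc', mul_comm Real.pi x,
      mul_div_assoc, div_self hπ, mul_one]
  have h2 := h.congr hseq
  rwa [mul_div_assoc', mul_comm Real.pi x, mul_div_assoc, div_self hπ, mul_one] at h2


lemma key_poly (a b c d p q : ℝ) (ha : 0 < a) (hab : a ≤ b) (hc : 0 < c)
    (hbc : b * c ≤ Real.pi) (hd : Real.pi ^ 2 ≤ d) (hp : -c^2 ≤ p) :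
    Real.sqrt ((d + a^2*p)^2 + (a^2*q)^2) * (d - b^2*c^2)
      ≤ (d - a^2*c^2) * Real.sqrt ((d + b^2*p)^2 + (b^2*q)^2) := by
  have hb : 0 < b := lt_of_lt_of_le ha hab
  have hd0 : (0:ℝ) < d := lt_of_lt_of_le (by positivity) hd
  have h1 : 0 ≤ d - b^2*c^2 := by nlinarith [mul_pos hb hc]
  have h2 : d - b^2*c^2 ≤ d - a^2*c^2 := by nlinarith [mul_le_mul_of_nonneg_right (mul_self_le_mul_self ha.le hab) (sq_nonneg c)]
  have h2' : 0 ≤ d - a^2*c^2 := le_trans h1 h2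
  have h3 : 0 ≤ d + a^2*p := by nlinarith [mul_le_mul_of_nonneg_left hp (sq_nonneg a)]
  have h4 : (d + a^2*p)*(d - b^2*c^2) ≤ (d - a^2*c^2)*(d + b^2*p) := by
    nlinarith [mul_nonneg (mul_nonneg hd0.le (by nlinarith : (0:ℝ) ≤ b^2 - a^2)) (by linarith : (0:ℝ) ≤ p + c^2)]
  have h5 : a^2*(d - b^2*c^2) ≤ b^2*(d - a^2*c^2) := by
    nlinarith [mul_nonneg hd0.le (by nlinarith : (0:ℝ) ≤ b^2 - a^2)]
  have e1 : Real.sqrt ((d + a^2*p)^2 + (a^2*q)^2) * (d - b^2*c^2)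
      = Real.sqrt (((d + a^2*p)^2 + (a^2*q)^2) * (d - b^2*c^2)^2) := by
    rw [Real.sqrt_mul (by positivity), Real.sqrt_sq h1]
  have e2 : (d - a^2*c^2) * Real.sqrt ((d + b^2*p)^2 + (b^2*q)^2)
      = Real.sqrt (((d + b^2*p)^2 + (b^2*q)^2) * (d - a^2*c^2)^2) := by
    rw [Real.sqrt_mul (by positivity), Real.sqrt_sq h2', mul_comm]
  rw [e1, e2]
  apply Real.sqrt_le_sqrt
  have h4sq := mul_self_le_mul_self (mul_nonneg h3 h1) h4
  have h5sq := mul_self_le_mul_self (mul_nonneg (by positivity) h1) h5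
  nlinarith [mul_le_mul_of_nonneg_left h5sq (sq_nonneg q), h4sq, sq_nonneg q]

lemma key_factor (a b c : ℝ) (ha : 0 < a) (hab : a ≤ b) (hc : 0 < c)
    (hbc : b * c ≤ Real.pi) (z : ℂ) (hz : -c^2 ≤ (z^2).re)
    (d : ℝ) (hd : Real.pi ^ 2 ≤ d) :
    ‖1 + ((a:ℂ)*z)^2 / ((d:ℝ):ℂ)‖ * (1 - (b*c)^2/d)
      ≤ (1 - (a*c)^2/d) * ‖1 + ((b:ℂ)*z)^2 / ((d:ℝ):ℂ)‖ := by
  have hd0 : (0:ℝ) < d := lt_of_lt_of_le (by positivity) hd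
  have habs : ∀ t : ℝ, ‖1 + ((t:ℂ)*z)^2/((d:ℝ):ℂ)‖
      = Real.sqrt ((d + t^2*(z^2).re)^2 + (t^2*(z^2).im)^2) / d := by
    intro t
    have he : (1 + ((t:ℂ)*z)^2/((d:ℝ):ℂ)) = (((d:ℝ):ℂ) + ((t^2:ℝ):ℂ)*z^2)/((d:ℝ):ℂ) := by
      have : ((d:ℝ):ℂ) ≠ 0 := by exact_mod_cast hd0.ne'
      field_simp
      push_cast; ring
    rw [he, norm_div, Complex.norm_real, Real.norm_eq_abs, abs_of_pos hd0, Complex.norm_def,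
      Complex.normSq_apply]
    simp [Complex.add_re, Complex.add_im, Complex.mul_re, Complex.mul_im,
      ← Complex.ofReal_pow, Complex.ofReal_re, Complex.ofReal_im]
    rw [mul_comm]
    congr 1
    ring
  rw [habs a, habs b]
  have hc1 : (1 - (b*c)^2/d) = (d - b^2*c^2)/d := by field_simp
  have hc2 : (1 - (a*c)^2/d) = (d - a^2*c^2)/d := by field_simp
  rw [hc1, hc2, div_mul_div_comm, div_mul_div_comm]
  have := key_poly a b c d (z^2).re (z^2).im ha hab hc hbc hd hz
  gcongr

theorem stmt1 (a b c : ℝ) (ha : 0 < a) (hab : a ≤ b) (hc : 0 < c) (hcb : c ≤ Real.pi / b)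
    (z : ℂ) (hz : z.im ^ 2 ≤ z.re ^ 2 + c ^ 2) :
    ‖Complex.sinh ((a : ℂ) * z)‖ * Real.sin (b * c)
      ≤ Real.sin (a * c) * ‖Complex.sinh ((b : ℂ) * z)‖ := by
  have hb : 0 < b := ha.trans_le hab
  have hbc : b * c ≤ Real.pi := by
    rw [le_div_iff₀ hb] at hcb; linarith
  have hzre : -c^2 ≤ (z^2).re := by
    have : (z^2).re = z.re^2 - z.im^2 := by rw [sq, Complex.mul_re]; ring
    rw [this]; linarith
  have hD : ∀ j : ℕ, Real.pi ^ 2 ≤ Real.pi^2*((j:ℝ)+1)^2 := by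
    intro j
    have hj : (1:ℝ) ≤ ((j:ℝ)+1)^2 := by nlinarith [Nat.cast_nonneg (α := ℝ) j]
    nlinarith [sq_nonneg Real.pi, hj]
  have hDpos : ∀ j : ℕ, 0 < Real.pi^2*((j:ℝ)+1)^2 := fun j =>
    lt_of_lt_of_le (by positivity) (hD j)
  have hcast : ∀ j : ℕ, ((Real.pi:ℂ)^2*((j:ℂ)+1)^2) = (((Real.pi^2*((j:ℝ)+1)^2 : ℝ)):ℂ) := by
    intro j; push_cast; ring
  -- the four sequences
  set Fa : ℕ → ℂ := fun n => ((a:ℂ)*z) * ∏ j ∈ Finset.range n,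
      ((1 : ℂ) + ((a:ℂ)*z) ^ 2 / ((Real.pi : ℂ) ^ 2 * ((j : ℂ) + 1) ^ 2)) with hFa
  set Fb : ℕ → ℂ := fun n => ((b:ℂ)*z) * ∏ j ∈ Finset.range n,
      ((1 : ℂ) + ((b:ℂ)*z) ^ 2 / ((Real.pi : ℂ) ^ 2 * ((j : ℂ) + 1) ^ 2)) with hFb
  set Ga : ℕ → ℝ := fun n => (a*c) * ∏ j ∈ Finset.range n,
      ((1 : ℝ) - (a*c) ^ 2 / (Real.pi ^ 2 * ((j : ℝ) + 1) ^ 2)) with hGa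
  set Gb : ℕ → ℝ := fun n => (b*c) * ∏ j ∈ Finset.range n,
      ((1 : ℝ) - (b*c) ^ 2 / (Real.pi ^ 2 * ((j : ℝ) + 1) ^ 2)) with hGb
  have hL : Filter.Tendsto (fun n => ‖Fa n‖ * Gb n) Filter.atTop
      (nhds (‖Complex.sinh ((a:ℂ)*z)‖ * Real.sin (b*c))) :=
    ((continuous_norm.tendsto _).comp (sinh_euler ((a:ℂ)*z))).mul (sin_euler (b*c))
  have hR : Filter.Tendsto (fun n => Ga n * ‖Fb n‖) Filter.atTop
      (nhds (Real.sin (a*c) * ‖Complex.sinh ((b:ℂ)*z)‖)) :=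
    (sin_euler (a*c)).mul ((continuous_norm.tendsto _).comp (sinh_euler ((b:ℂ)*z)))
  refine le_of_tendsto_of_tendsto' hL hR ?_
  intro n
  have habsFa : ‖Fa n‖ = (a * ‖z‖) * ∏ j ∈ Finset.range n,
      ‖(1 : ℂ) + ((a:ℂ)*z) ^ 2 / ((Real.pi : ℂ) ^ 2 * ((j : ℂ) + 1) ^ 2)‖ := by
    rw [hFa]
    simp only [norm_mul, Complex.norm_real, Real.norm_eq_abs, abs_of_pos ha, norm_prod]
  have habsFb : ‖Fb n‖ = (b * ‖z‖) * ∏ j ∈ Finset.range n,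
      ‖(1 : ℂ) + ((b:ℂ)*z) ^ 2 / ((Real.pi : ℂ) ^ 2 * ((j : ℂ) + 1) ^ 2)‖ := by
    rw [hFb]
    simp only [norm_mul, Complex.norm_real, Real.norm_eq_abs, abs_of_pos hb, norm_prod]
  rw [habsFa, habsFb, hGa, hGb]
  have lhs_eq : (a * ‖z‖) * (∏ j ∈ Finset.range n,
      ‖(1 : ℂ) + ((a:ℂ)*z) ^ 2 / ((Real.pi : ℂ) ^ 2 * ((j : ℂ) + 1) ^ 2)‖)
      * ((b*c) * ∏ j ∈ Finset.range n, ((1 : ℝ) - (b*c) ^ 2 / (Real.pi ^ 2 * ((j : ℝ) + 1) ^ 2)))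
      = (a*b*c*‖z‖) * ∏ j ∈ Finset.range n,
        (‖(1 : ℂ) + ((a:ℂ)*z) ^ 2 / ((Real.pi : ℂ) ^ 2 * ((j : ℂ) + 1) ^ 2)‖
          * ((1 : ℝ) - (b*c) ^ 2 / (Real.pi ^ 2 * ((j : ℝ) + 1) ^ 2))) := by
    rw [Finset.prod_mul_distrib]; ring
  have rhs_eq : ((a*c) * ∏ j ∈ Finset.range n, ((1 : ℝ) - (a*c) ^ 2 / (Real.pi ^ 2 * ((j : ℝ) + 1) ^ 2)))
      * ((b * ‖z‖) * ∏ j ∈ Finset.range n,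
      ‖(1 : ℂ) + ((b:ℂ)*z) ^ 2 / ((Real.pi : ℂ) ^ 2 * ((j : ℂ) + 1) ^ 2)‖)
      = (a*b*c*‖z‖) * ∏ j ∈ Finset.range n,
        (((1 : ℝ) - (a*c) ^ 2 / (Real.pi ^ 2 * ((j : ℝ) + 1) ^ 2))
          * ‖(1 : ℂ) + ((b:ℂ)*z) ^ 2 / ((Real.pi : ℂ) ^ 2 * ((j : ℂ) + 1) ^ 2)‖) := by
    rw [Finset.prod_mul_distrib]; ring
  rw [lhs_eq, rhs_eq]
  apply mul_le_mul_of_nonneg_left _ (by positivity)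
  apply Finset.prod_le_prod
  · intro j _
    apply mul_nonneg (norm_nonneg _)
    have := hD j
    have h1 : (b*c)^2 ≤ Real.pi^2*((j:ℝ)+1)^2 := by nlinarith [mul_pos hb hc]
    have := hDpos j
    rw [sub_nonneg, div_le_one (hDpos j)]
    exact h1
  · intro j _
    have h := key_factor a b c ha hab hc hbc z hzre (Real.pi^2*((j:ℝ)+1)^2) (hD j)
    rw [hcast j]
    convert h using 4 <;> push_cast <;> ring
end

section
/- For all real r with 0 ≤ r ≤ 1 and all real θ, |1 + re^{iθ} + r²e^{2iθ}|² ≤ ((1 - rs + r²)/(1 + rs + r²))² · (1 + r + r²)², where s = sin²(θ/2). -/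
open Complex Real

theorem stmt2 (r θ : ℝ) (hr0 : 0 ≤ r) (hr1 : r ≤ 1) :
    ‖1 + (r : ℂ) * Complex.exp (θ * Complex.I)
        + (r : ℂ) ^ 2 * Complex.exp (2 * θ * Complex.I)‖ ^ 2
      ≤ ((1 - r * Real.sin (θ / 2) ^ 2 + r ^ 2) / (1 + r * Real.sin (θ / 2) ^ 2 + r ^ 2)) ^ 2
          * (1 + r + r ^ 2) ^ 2 := by
  set t : ℝ := Real.sin (θ / 2) ^ 2 with ht
  have ht0 : 0 ≤ t := sq_nonneg _
  have ht1 : t ≤ 1 := Real.sin_sq_le_one _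
  have hcos : Real.cos θ = 1 - 2 * t := by
    have h := Real.sin_sq_eq_half_sub (θ / 2)
    rw [show 2 * (θ / 2) = θ by ring] at h
    rw [ht, h]; ring
  have hsin : Real.sin θ ^ 2 = 1 - Real.cos θ ^ 2 := (Real.sin_sq θ).trans (by ring)
  have h2θ : (2 : ℂ) * (θ : ℂ) * Complex.I = ((2 * θ : ℝ) : ℂ) * Complex.I := by
    push_cast; ring
  have hLHS : ‖1 + (r : ℂ) * Complex.exp (θ * Complex.I)
        + (r : ℂ) ^ 2 * Complex.exp (2 * θ * Complex.I)‖ ^ 2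
      = (1 + r * Real.cos θ + r ^ 2 * Real.cos (2 * θ)) ^ 2
        + (r * Real.sin θ + r ^ 2 * Real.sin (2 * θ)) ^ 2 := by
    have hexp : ∀ x : ℝ, Complex.exp ((x : ℂ) * Complex.I)
        = ((Real.cos x : ℂ) + (Real.sin x : ℂ) * Complex.I) := fun x => by
      rw [Complex.exp_mul_I, Complex.ofReal_cos, Complex.ofReal_sin]
    have hz : (1 + (r : ℂ) * Complex.exp (θ * Complex.I)
        + (r : ℂ) ^ 2 * Complex.exp (2 * θ * Complex.I))
        = (((1 + r * Real.cos θ + r ^ 2 * Real.cos (2 * θ) : ℝ) : ℂ)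
          + ((r * Real.sin θ + r ^ 2 * Real.sin (2 * θ) : ℝ) : ℂ) * Complex.I) := by
      rw [h2θ, hexp θ, hexp (2 * θ)]; push_cast; ring
    rw [hz, Complex.sq_norm, Complex.normSq_add_mul_I]
  rw [hLHS, Real.cos_two_mul, Real.sin_two_mul]
  have hd : 0 < 1 + r * t + r ^ 2 := by nlinarith
  rw [div_pow, div_mul_eq_mul_div, le_div_iff₀ (by positivity)]
  have hE : 0 ≤ 2 + 2 * r ^ 4 + 4 * r ^ 2 + 4 * r ^ 2 * t ^ 2
      + (7 * r + 7 * r ^ 3) * t - r - r ^ 3 := by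
    nlinarith [mul_nonneg (mul_nonneg hr0 hr0) (sub_nonneg.2 hr1), mul_nonneg hr0 ht0,
      mul_nonneg (mul_nonneg (mul_nonneg hr0 hr0) hr0) ht0, sq_nonneg (r * t), sq_nonneg r]
  rw [hcos] at hsin ⊢
  rw [show (r * Real.sin θ + r ^ 2 * (2 * Real.sin θ * (1 - 2 * t))) ^ 2
      = Real.sin θ ^ 2 * (r + 2 * r ^ 2 * (1 - 2 * t)) ^ 2 by ring, hsin]
  nlinarith [mul_nonneg (mul_nonneg (mul_nonneg
      (by positivity : (0:ℝ) ≤ 4 * r ^ 2) ht0) (by linarith : (0:ℝ) ≤ 1 - t)) hE, hsin]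
end

section
/- For all n ∈ ℤ⁺ and all real r with 0 < r ≤ 1, 3r² · (Σ_{k=1}^{n} k² r^k) ≥ (Σ_{k=1}^{n} r^k)³. -/
open Finset in
lemma sum_pow_le (r : ℝ) (hr0 : 0 < r) (hr1 : r ≤ 1) (m : ℕ) :
    ∑ k ∈ Finset.Icc 1 m, r ^ k ≤ m * r := by
  induction m with
  | zero => simp
  | succ m ih =>
    rw [Finset.sum_Icc_succ_top (by omega)]
    have h : r ^ (m + 1) ≤ r := pow_le_of_le_one hr0.le hr1 (by omega)
    push_cast
    nlinarith

open Finset in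
lemma sum_pow_nonneg (r : ℝ) (hr0 : 0 < r) (m : ℕ) :
    0 ≤ ∑ k ∈ Finset.Icc 1 m, r ^ k :=
  Finset.sum_nonneg fun k _ => (pow_pos hr0 k).le

theorem stmt4 (n : ℕ) (hn : 1 ≤ n) (r : ℝ) (hr0 : 0 < r) (hr1 : r ≤ 1) :
    3 * r ^ 2 * (∑ k ∈ Finset.Icc 1 n, (k : ℝ) ^ 2 * r ^ k)
      ≥ (∑ k ∈ Finset.Icc 1 n, r ^ k) ^ 3 := by
  induction n, hn using Nat.le_induction with
  | base => simp; nlinarith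
  | succ n hn ih =>
    rw [Finset.sum_Icc_succ_top (by omega), Finset.sum_Icc_succ_top (by omega)]
    have hS := sum_pow_le r hr0 hr1 n
    have hS' := sum_pow_le r hr0 hr1 (n + 1)
    have hNN := sum_pow_nonneg r hr0 n
    have hrp : (0:ℝ) < r ^ (n + 1) := pow_pos hr0 _
    rw [Finset.sum_Icc_succ_top (by omega : 1 ≤ n + 1)] at hS'
    set S := ∑ k ∈ Finset.Icc 1 n, r ^ k with hSdef
    -- S + r^(n+1) ≤ (n+1) r
    have key : (S + r ^ (n + 1)) ^ 2 ≤ ((n:ℝ) + 1) ^ 2 * r ^ 2 := by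
      have h1 : 0 ≤ S + r ^ (n + 1) := by positivity
      push_cast at hS'
      nlinarith
    push_cast
    nlinarith [ih, mul_le_mul_of_nonneg_right key hrp.le,
      mul_nonneg hNN (sq_nonneg (r ^ (n+1))), pow_pos hrp 3, mul_nonneg (mul_nonneg hNN hNN) hrp.le]
end

section
/- For all n ∈ ℤ⁺ and all real r with 0 < r ≤ 1, (r+1)·(Σ_{k=1}^{n} r^k)³ ≥ r² · (Σ_{k=1}^{n} k² r^k). -/
open Finset

lemma tri (n : ℕ) (F : ℕ → ℕ → ℝ) :
    ∑ k ∈ Icc 1 n, ∑ j ∈ Icc 1 k, F j (k + 1 - j)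
      = ∑ p ∈ (Icc 1 n ×ˢ Icc 1 n).filter (fun p => p.1 + p.2 ≤ n + 1), F p.1 p.2 := by
  rw [Finset.sum_sigma']
  refine Finset.sum_nbij' (fun s => (s.2, s.1 + 1 - s.2)) (fun p => ⟨p.1 + p.2 - 1, p.1⟩)
    ?_ ?_ ?_ ?_ ?_
  · rintro ⟨k, j⟩ hs
    simp only [Finset.mem_sigma, Finset.mem_Icc] at hs
    simp only [Finset.mem_filter, Finset.mem_product, Finset.mem_Icc]
    omega
  · rintro ⟨a, b⟩ hp
    simp only [Finset.mem_filter, Finset.mem_product, Finset.mem_Icc] at hp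
    simp only [Finset.mem_sigma, Finset.mem_Icc]
    omega
  · rintro ⟨k, j⟩ hs
    simp only [Finset.mem_sigma, Finset.mem_Icc] at hs
    simp only [Sigma.mk.inj_iff, heq_eq_eq]
    exact ⟨by omega, trivial⟩
  · rintro ⟨a, b⟩ hp
    simp only [Finset.mem_filter, Finset.mem_product, Finset.mem_Icc] at hp
    simp only [Prod.mk.injEq]
    exact ⟨trivial, by omega⟩
  · rintro ⟨k, j⟩ hs
    rfl

lemma shift (n : ℕ) (hn : 1 ≤ n) (g : ℕ → ℝ) (h0 : g 0 = 0) :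
    ∑ k ∈ Icc 1 n, g (k - 1) = ∑ m ∈ Icc 1 (n - 1), g m := by
  have h1 : ∑ k ∈ Icc 1 n, g (k - 1) = ∑ m ∈ Icc 0 (n - 1), g m := by
    refine Finset.sum_nbij' (fun k => k - 1) (fun m => m + 1) ?_ ?_ ?_ ?_ ?_
    · intro a ha; simp only [Finset.mem_Icc] at *; omega
    · intro a ha; simp only [Finset.mem_Icc] at *; omega
    · intro a ha; simp only [Finset.mem_Icc] at ha; show a - 1 + 1 = a; omega
    · intro a ha; simp only [Finset.mem_Icc] at ha; show a + 1 - 1 = a; omega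
    · intro a ha; rfl
  have h : Icc 0 (n - 1) = insert 0 (Icc 1 (n - 1)) := by
    ext x; simp only [Finset.mem_Icc, Finset.mem_insert]; omega
  rw [h1, h, Finset.sum_insert (by simp), h0, zero_add]

lemma gauss (k : ℕ) : ∑ j ∈ Icc 1 k, (j : ℝ) = k * (k + 1) / 2 := by
  induction k with
  | zero => simp
  | succ m ih =>
    rw [Finset.sum_Icc_succ_top (by omega : 1 ≤ m + 1), ih]
    push_cast; ring

theorem stmt5 (n : ℕ) (hn : 1 ≤ n) (r : ℝ) (hr0 : 0 < r) (hr1 : r ≤ 1) :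
    (r + 1) * (∑ k ∈ Finset.Icc 1 n, r ^ k) ^ 3
      ≥ r ^ 2 * (∑ k ∈ Finset.Icc 1 n, (k : ℝ) ^ 2 * r ^ k) := by
  set S : ℝ := ∑ k ∈ Icc 1 n, r ^ k with hSdef
  set T : ℝ := ∑ k ∈ Icc 1 n, (k : ℝ) * r ^ k with hTdef
  have hS : 0 ≤ S := Finset.sum_nonneg fun k _ => by positivity
  have hT : 0 ≤ T := Finset.sum_nonneg fun k _ => by positivity
  -- L1 : r * T ≤ S * S
  have L1 : r * T ≤ S * S := by
    have h1 : r * T = ∑ k ∈ Icc 1 n, ∑ j ∈ Icc 1 k, r ^ j * r ^ (k + 1 - j) := by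
      rw [hTdef, Finset.mul_sum]
      refine Finset.sum_congr rfl fun k hk => ?_
      simp only [Finset.mem_Icc] at hk
      have h2 : ∀ j ∈ Icc 1 k, r ^ j * r ^ (k + 1 - j) = r ^ (k + 1) := by
        intro j hj; simp only [Finset.mem_Icc] at hj
        rw [← pow_add]; congr 1; omega
      rw [Finset.sum_congr rfl h2, Finset.sum_const, Nat.card_Icc, nsmul_eq_mul]
      push_cast [Nat.add_sub_cancel]
      rw [pow_succ]; ring
    rw [h1, tri n (fun j i => r ^ j * r ^ i)]
    calc ∑ p ∈ (Icc 1 n ×ˢ Icc 1 n).filter (fun p => p.1 + p.2 ≤ n + 1),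
            r ^ p.1 * r ^ p.2
        ≤ ∑ p ∈ Icc 1 n ×ˢ Icc 1 n, r ^ p.1 * r ^ p.2 :=
          Finset.sum_le_sum_of_subset_of_nonneg (Finset.filter_subset _ _)
            (fun p _ _ => by positivity)
      _ = S * S := by rw [Finset.sum_product, hSdef, Finset.sum_mul_sum]
  -- L2
  set A : ℝ := ∑ k ∈ Icc 1 n, (k : ℝ) ^ 2 * r ^ k with hAdef
  have L2 : r * A ≤ T * S + r * (T * S) := by
    have key : ∀ k ∈ Icc 1 n, r * ((k : ℝ) ^ 2 * r ^ k) =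
        (∑ j ∈ Icc 1 k, (j : ℝ) * r ^ j * r ^ (k + 1 - j))
        + (∑ j ∈ Icc 1 (k - 1), (j : ℝ) * r ^ j * r ^ (k - j)) * r := by
      intro k hk
      simp only [Finset.mem_Icc] at hk
      have h1 : ∀ j ∈ Icc 1 k, (j : ℝ) * r ^ j * r ^ (k + 1 - j) = (j : ℝ) * r ^ (k + 1) := by
        intro j hj; simp only [Finset.mem_Icc] at hj
        rw [mul_assoc, ← pow_add]; congr 2; omega
      have h2 : ∀ j ∈ Icc 1 (k - 1), (j : ℝ) * r ^ j * r ^ (k - j) = (j : ℝ) * r ^ k := by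
        intro j hj; simp only [Finset.mem_Icc] at hj
        rw [mul_assoc, ← pow_add]; congr 2; omega
      rw [Finset.sum_congr rfl h1, Finset.sum_congr rfl h2, ← Finset.sum_mul, ← Finset.sum_mul,
        gauss k, gauss (k - 1)]
      have hc : ((k - 1 : ℕ) : ℝ) = (k : ℝ) - 1 := by
        rw [Nat.cast_sub hk.1]; norm_num
      rw [hc, pow_succ]
      ring
    rw [hAdef, Finset.mul_sum, Finset.sum_congr rfl key, Finset.sum_add_distrib]
    have p1 : ∑ k ∈ Icc 1 n, ∑ j ∈ Icc 1 k, (j : ℝ) * r ^ j * r ^ (k + 1 - j) ≤ T * S := by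
      rw [tri n (fun j i => (j : ℝ) * r ^ j * r ^ i)]
      calc ∑ p ∈ (Icc 1 n ×ˢ Icc 1 n).filter (fun p => p.1 + p.2 ≤ n + 1),
              (p.1 : ℝ) * r ^ p.1 * r ^ p.2
          ≤ ∑ p ∈ Icc 1 n ×ˢ Icc 1 n, (p.1 : ℝ) * r ^ p.1 * r ^ p.2 :=
            Finset.sum_le_sum_of_subset_of_nonneg (Finset.filter_subset _ _)
              (fun p _ _ => by positivity)
        _ = T * S := by
            rw [Finset.sum_product, hTdef, hSdef, Finset.sum_mul_sum]
    have p2 : ∑ k ∈ Icc 1 n, (∑ j ∈ Icc 1 (k - 1), (j : ℝ) * r ^ j * r ^ (k - j)) * r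
        ≤ r * (T * S) := by
      have hsh : ∑ k ∈ Icc 1 n, ∑ j ∈ Icc 1 (k - 1), (j : ℝ) * r ^ j * r ^ (k - j)
          = ∑ m ∈ Icc 1 (n - 1), ∑ j ∈ Icc 1 m, (j : ℝ) * r ^ j * r ^ (m + 1 - j) := by
        rw [← shift n hn (fun m => ∑ j ∈ Icc 1 m, (j : ℝ) * r ^ j * r ^ (m + 1 - j)) (by simp)]
        refine Finset.sum_congr rfl fun k hk => ?_
        simp only [Finset.mem_Icc] at hk
        refine Finset.sum_congr rfl fun j hj => ?_
        simp only [Finset.mem_Icc] at hj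
        congr 2
        omega
      calc ∑ k ∈ Icc 1 n, (∑ j ∈ Icc 1 (k - 1), (j : ℝ) * r ^ j * r ^ (k - j)) * r
          = (∑ m ∈ Icc 1 (n - 1), ∑ j ∈ Icc 1 m, (j : ℝ) * r ^ j * r ^ (m + 1 - j)) * r := by
            rw [← Finset.sum_mul, hsh]
        _ ≤ T * S * r := by
            refine mul_le_mul_of_nonneg_right ?_ hr0.le
            rw [tri (n - 1) (fun j i => (j : ℝ) * r ^ j * r ^ i)]
            calc ∑ p ∈ (Icc 1 (n - 1) ×ˢ Icc 1 (n - 1)).filter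
                    (fun p => p.1 + p.2 ≤ n - 1 + 1), (p.1 : ℝ) * r ^ p.1 * r ^ p.2
                ≤ ∑ p ∈ Icc 1 n ×ˢ Icc 1 n, (p.1 : ℝ) * r ^ p.1 * r ^ p.2 := by
                  refine Finset.sum_le_sum_of_subset_of_nonneg ?_ (fun p _ _ => by positivity)
                  intro p hp
                  simp only [Finset.mem_filter, Finset.mem_product, Finset.mem_Icc] at *
                  omega
              _ = T * S := by
                  rw [Finset.sum_product, hTdef, hSdef, Finset.sum_mul_sum]
        _ = r * (T * S) := by ring
    linarith
  nlinarith [mul_le_mul_of_nonneg_left L2 hr0.le, mul_le_mul_of_nonneg_left L1 hS,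
    mul_le_mul_of_nonneg_left L1 (mul_nonneg hr0.le hS), sq_nonneg r, mul_nonneg hS hT]
end

section
/- For all n ∈ ℤ⁺ and all real r with 0 < r ≤ 1, (r² + 4r + 1)·(Σ_{k=1}^{n} r^k)·(Σ_{k=1}^{n} k² r^k) ≥ r(r+1)·(Σ_{k=1}^{n} k³ r^k). -/
open Finset

def tri_s6 (s : ℕ) : Finset (ℕ × ℕ) :=
  ((Finset.Icc 1 s) ×ˢ (Finset.Icc 1 s)).filter fun p => p.1 + p.2 ≤ s + 1

lemma mem_tri {s : ℕ} {p : ℕ × ℕ} :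
    p ∈ tri_s6 s ↔ 1 ≤ p.1 ∧ 1 ≤ p.2 ∧ p.1 + p.2 ≤ s + 1 := by
  simp only [tri_s6, Finset.mem_filter, Finset.mem_product, Finset.mem_Icc]
  omega

noncomputable def T (r : ℝ) (s : ℕ) : ℝ := ∑ p ∈ tri_s6 s, (p.2 : ℝ)^2 * r^(p.1 + p.2)

def dg (m a b : ℕ) : Finset (ℕ × ℕ) := (Finset.Icc a b).image fun k => (m - k, k)

lemma dg_sum (r : ℝ) (m a b : ℕ) (hb : b ≤ m) :
    ∑ p ∈ dg m a b, (p.2 : ℝ)^2 * r^(p.1 + p.2)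
      = (∑ k ∈ Finset.Icc a b, (k : ℝ)^2) * r^m := by
  rw [dg, Finset.sum_image (by intro x _ y _ h; exact (Prod.mk.injEq _ _ _ _).mp h |>.2)]
  rw [Finset.sum_mul]
  apply Finset.sum_congr rfl
  intro k hk
  rw [Finset.mem_Icc] at hk
  have : m - k + k = m := by omega
  rw [this]

lemma tri_succ (s : ℕ) : tri_s6 (s + 1) = tri_s6 s ∪ dg (s + 2) 1 (s + 1) := by
  ext ⟨a, b⟩
  simp only [mem_tri, Finset.mem_union, dg, Finset.mem_image, Finset.mem_Icc]
  constructor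
  · rintro ⟨h1, h2, h3⟩
    by_cases h : a + b ≤ s + 1
    · exact Or.inl ⟨h1, h2, h⟩
    · exact Or.inr ⟨b, by omega, by simp [Prod.ext_iff]; omega⟩
  · rintro (⟨h1, h2, h3⟩ | ⟨k, hk, hke⟩)
    · exact ⟨h1, h2, by omega⟩
    · obtain ⟨rfl, rfl⟩ : s + 2 - k = a ∧ k = b := by
        simpa [Prod.ext_iff] using hke
      refine ⟨by omega, by omega, by omega⟩

lemma tri_disj_dg (s m a b : ℕ) (hm : s + 1 < m) :
    Disjoint (tri_s6 s) (dg m a b) := by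
  rw [Finset.disjoint_left]
  rintro ⟨x, y⟩ hx hy
  rw [mem_tri] at hx
  simp only [dg, Finset.mem_image, Finset.mem_Icc] at hy
  obtain ⟨k, hk, hke⟩ := hy
  obtain ⟨rfl, rfl⟩ : m - k = x ∧ k = y := by simpa [Prod.ext_iff] using hke
  omega

lemma T_succ (r : ℝ) (s : ℕ) :
    T r (s + 1) = T r s + (∑ k ∈ Finset.Icc 1 (s + 1), (k : ℝ)^2) * r^(s + 2) := by
  rw [T, tri_succ, Finset.sum_union (tri_disj_dg s (s + 2) 1 (s + 1) (by omega)),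
    dg_sum r (s + 2) 1 (s + 1) (by omega)]
  rfl

lemma sumsq (n : ℕ) :
    6 * ∑ k ∈ Finset.Icc 1 n, (k : ℝ)^2 = n * (n + 1) * (2 * n + 1) := by
  induction n with
  | zero => simp
  | succ m ih =>
    rw [Finset.sum_Icc_succ_top (by omega)]
    push_cast
    push_cast at ih
    linarith [ih]

lemma key (r : ℝ) : ∀ n : ℕ, 1 ≤ n →
    r * (r + 1) * (∑ k ∈ Finset.Icc 1 n, (k : ℝ)^3 * r^k)
      = T r n + 4 * r * T r (n - 1) + r^2 * T r (n - 2) + (n : ℝ)^3 * r^(n + 2) := by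
  intro n
  induction n with
  | zero => omega
  | succ m ih =>
    intro _
    by_cases hm : 1 ≤ m
    · have ih' := ih hm
      -- rewrite the three T's
      have hT1 : T r (m + 1) = T r m + (∑ k ∈ Finset.Icc 1 (m + 1), (k : ℝ)^2) * r^(m + 2) :=
        T_succ r m
      have hT2 : T r m = T r (m - 1) + (∑ k ∈ Finset.Icc 1 m, (k : ℝ)^2) * r^(m + 1) := by
        have := T_succ r (m - 1)
        have h1 : m - 1 + 1 = m := by omega
        have h2 : m - 1 + 2 = m + 1 := by omega
        rw [h1, h2] at this
        exact this
      have hT3 : T r (m - 1) = T r (m - 2) + (∑ k ∈ Finset.Icc 1 (m - 1), (k : ℝ)^2) * r^m := by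
        by_cases hm2 : 2 ≤ m
        · have := T_succ r (m - 2)
          have h1 : m - 2 + 1 = m - 1 := by omega
          have h2 : m - 2 + 2 = m := by omega
          rw [h1, h2] at this
          exact this
        · have hm1 : m = 1 := by omega
          subst hm1
          norm_num
      have hS : (∑ k ∈ Finset.Icc 1 (m + 1), (k : ℝ)^3 * r^k)
          = (∑ k ∈ Finset.Icc 1 m, (k : ℝ)^3 * r^k) + ((m : ℝ) + 1)^3 * r^(m + 1) := by
        rw [Finset.sum_Icc_succ_top (by omega)]
        push_cast
        ring
      have hq1 := sumsq (m + 1)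
      have hq2 := sumsq m
      have hq3 := sumsq (m - 1)
      have hcast : ((m - 1 : ℕ) : ℝ) = (m : ℝ) - 1 := by
        have h1 : 1 ≤ m := hm
        push_cast [h1]
        ring
      rw [hcast] at hq3
      have hsuc2 : (m + 1) - 1 = m := by omega
      have hsuc3 : (m + 1) - 2 = m - 1 := by omega
      rw [hsuc2, hsuc3]
      push_cast at hq1 hq2 ⊢
      linear_combination (r*(r+1))*hS + ih' - hT1 - 4*r*hT2 - r^2*hT3
        - (r^(m+2)/6)*hq1 - (4*r^(m+2)/6)*hq2 - (r^(m+2)/6)*hq3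
    · have hm0 : m = 0 := by omega
      subst hm0
      have h0 : T r 0 = 0 := by simp [T, tri_s6]
      have h1 : tri_s6 1 = {(1, 1)} := by decide
      have h2 : T r 1 = r^2 := by simp [T, h1]
      norm_num [h0, h2]
      ring

lemma tri_dg_le (r : ℝ) (hr : 0 ≤ r) (n s m a b : ℕ) (hm : s + 1 < m) (hb : b ≤ m)
    (hs : s ≤ n)
    (hd : ∀ k, a ≤ k → k ≤ b → 1 ≤ m - k ∧ m - k ≤ n ∧ 1 ≤ k ∧ k ≤ n) :
    T r s + (∑ k ∈ Finset.Icc a b, (k : ℝ)^2) * r^m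
      ≤ ∑ p ∈ Finset.Icc 1 n ×ˢ Finset.Icc 1 n, (p.2 : ℝ)^2 * r^(p.1 + p.2) := by
  rw [← dg_sum r m a b hb, T, ← Finset.sum_union (tri_disj_dg s m a b hm)]
  apply Finset.sum_le_sum_of_subset_of_nonneg
  · intro p hp
    rw [Finset.mem_union] at hp
    rw [Finset.mem_product, Finset.mem_Icc, Finset.mem_Icc]
    rcases hp with hp | hp
    · rw [mem_tri] at hp
      omega
    · simp only [dg, Finset.mem_image, Finset.mem_Icc] at hp
      obtain ⟨k, hk, hke⟩ := hp
      subst hke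
      have := hd k hk.1 hk.2
      exact ⟨⟨this.1, this.2.1⟩, this.2.2.1, this.2.2.2⟩
  · intro p _ _
    positivity

theorem stmt6 (n : ℕ) (hn : 1 ≤ n) (r : ℝ) (hr0 : 0 < r) (hr1 : r ≤ 1) :
    (r ^ 2 + 4 * r + 1) * (∑ k ∈ Finset.Icc 1 n, r ^ k)
        * (∑ k ∈ Finset.Icc 1 n, (k : ℝ) ^ 2 * r ^ k)
      ≥ r * (r + 1) * (∑ k ∈ Finset.Icc 1 n, (k : ℝ) ^ 3 * r ^ k) := by
  have hr : (0:ℝ) ≤ r := le_of_lt hr0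
  have hV : (∑ j ∈ Finset.Icc 1 n, r^j) * (∑ k ∈ Finset.Icc 1 n, (k:ℝ)^2 * r^k)
      = ∑ p ∈ Finset.Icc 1 n ×ˢ Finset.Icc 1 n, (p.2 : ℝ)^2 * r^(p.1 + p.2) := by
    rw [Finset.sum_mul_sum, Finset.sum_product]
    exact Finset.sum_congr rfl fun j _ => Finset.sum_congr rfl fun k _ => by
      rw [pow_add]; ring
  set V := ∑ p ∈ Finset.Icc 1 n ×ˢ Finset.Icc 1 n, (p.2 : ℝ)^2 * r^(p.1 + p.2) with hVdef
  have e1 : T r n + (∑ k ∈ Finset.Icc 2 n, (k : ℝ)^2) * r^(n+2) ≤ V :=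
    tri_dg_le r hr n n (n+2) 2 n (by omega) (by omega) le_rfl (fun k h1 h2 => by omega)
  have e2 : T r (n-1) + (∑ k ∈ Finset.Icc 1 n, (k : ℝ)^2) * r^(n+1) ≤ V :=
    tri_dg_le r hr n (n-1) (n+1) 1 n (by omega) (by omega) (by omega)
      (fun k h1 h2 => by omega)
  have e3 : T r (n-2) + (∑ k ∈ Finset.Icc 1 (n-1), (k : ℝ)^2) * r^n ≤ V := by
    by_cases h1 : n = 1
    · subst h1
      have h0 : T r 0 = 0 := by simp [T, tri_s6]
      simp only [h0]
      norm_num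
      apply Finset.sum_nonneg
      intro p _
      positivity
    · exact tri_dg_le r hr n (n-2) n 1 (n-1) (by omega) (by omega) (by omega)
        (fun k hk1 hk2 => by omega)
  have hkey := key r n hn
  -- arithmetic on sums of squares
  have hq1 := sumsq n
  have hq2 := sumsq (n-1)
  have hcast : ((n - 1 : ℕ) : ℝ) = (n : ℝ) - 1 := by
    have h1 : 1 ≤ n := hn
    push_cast [h1]; ring
  rw [hcast] at hq2
  have hsplit : (∑ k ∈ Finset.Icc 1 n, (k : ℝ)^2)
      = 1 + ∑ k ∈ Finset.Icc 2 n, (k : ℝ)^2 := by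
    have : Finset.Icc 1 n = insert 1 (Finset.Icc 2 n) := by
      ext x
      simp only [Finset.mem_Icc, Finset.mem_insert]
      omega
    rw [this, Finset.sum_insert (by simp)]
    norm_num
  have hn1 : (1:ℝ) ≤ (n:ℝ) := by exact_mod_cast hn
  have harith : (n:ℝ)^3 ≤ (∑ k ∈ Finset.Icc 2 n, (k : ℝ)^2)
      + 4 * (∑ k ∈ Finset.Icc 1 n, (k : ℝ)^2) + (∑ k ∈ Finset.Icc 1 (n-1), (k : ℝ)^2) := by
    have h0 : (0:ℝ) ≤ (n:ℝ) - 1 := by linarith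
    nlinarith [hq1, hq2, hsplit, hn1, mul_nonneg h0 (sq_nonneg (n:ℝ)),
      mul_nonneg h0 (by linarith : (0:ℝ) ≤ (n:ℝ)), h0]
  have hpow : (0:ℝ) ≤ r^(n+2) := by positivity
  have hbig : (n:ℝ)^3 * r^(n+2) ≤ (∑ k ∈ Finset.Icc 2 n, (k : ℝ)^2) * r^(n+2)
      + 4*r*((∑ k ∈ Finset.Icc 1 n, (k : ℝ)^2) * r^(n+1))
      + r^2*((∑ k ∈ Finset.Icc 1 (n-1), (k : ℝ)^2) * r^n) := by
    have := mul_le_mul_of_nonneg_right harith hpow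
    calc (n:ℝ)^3 * r^(n+2) ≤ ((∑ k ∈ Finset.Icc 2 n, (k : ℝ)^2)
          + 4 * (∑ k ∈ Finset.Icc 1 n, (k : ℝ)^2)
          + (∑ k ∈ Finset.Icc 1 (n-1), (k : ℝ)^2)) * r^(n+2) := this
      _ = _ := by ring
  have m2 : 4*r*(T r (n-1) + (∑ k ∈ Finset.Icc 1 n, (k : ℝ)^2) * r^(n+1)) ≤ 4*r*V :=
    mul_le_mul_of_nonneg_left e2 (by linarith)
  have m3 : r^2*(T r (n-2) + (∑ k ∈ Finset.Icc 1 (n-1), (k : ℝ)^2) * r^n) ≤ r^2*V :=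
    mul_le_mul_of_nonneg_left e3 (by positivity)
  have hgoal : (r ^ 2 + 4 * r + 1) * (∑ k ∈ Finset.Icc 1 n, r ^ k)
      * (∑ k ∈ Finset.Icc 1 n, (k : ℝ) ^ 2 * r ^ k) = (r ^ 2 + 4 * r + 1) * V := by
    rw [mul_assoc, hV]
  rw [ge_iff_le, hkey, hgoal]
  nlinarith [e1, m2, m3, hbig]
end

section
/- For all real x ∈ [-1, 1] and all positive integers n, the Chebyshev polynomial of the first kind satisfies T_n(x) ≥ (-n²(1-x)(2x+3) + 3(1+x)) / (n²(1-x) + 3(1+x)). -/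
open Real

private lemma aux_sin_ge_sub_cube {x : ℝ} (hx : 0 ≤ x) : x - x^3/6 ≤ Real.sin x := by
  have hd : ∀ y : ℝ, HasDerivAt (fun t : ℝ => Real.sin t - (t - t^3/6))
      (Real.cos y - (1 - y^2/2)) y := by
    intro y
    have h2 : HasDerivAt (fun t : ℝ => t^3) (3*y^2) y := by
      simpa using hasDerivAt_pow 3 y
    have h1 : HasDerivAt (fun t : ℝ => t - t^3/6) (1 - y^2/2) y := by
      have := (hasDerivAt_id y).sub (h2.div_const 6)
      exact this.congr_deriv (by ring)
    exact (Real.hasDerivAt_sin y).sub h1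
  have hmono : Monotone (fun t : ℝ => Real.sin t - (t - t^3/6)) :=
    monotone_of_deriv_nonneg (fun y => (hd y).differentiableAt)
      (fun y => by
        rw [(hd y).deriv]
        nlinarith [Real.one_sub_sq_div_two_le_cos (x := y)])
  have h0 := hmono hx
  simp at h0
  linarith

private lemma aux_cos_le_quartic {x : ℝ} (hx : 0 ≤ x) : Real.cos x ≤ 1 - x^2/2 + x^4/24 := by
  have hd : ∀ y : ℝ, HasDerivAt (fun t : ℝ => 1 - t^2/2 + t^4/24 - Real.cos t)
      (Real.sin y - (y - y^3/6)) y := by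
    intro y
    have h2 : HasDerivAt (fun t : ℝ => t^2) (2*y) y := by
      simpa using hasDerivAt_pow 2 y
    have h4 : HasDerivAt (fun t : ℝ => t^4) (4*y^3) y := by
      simpa using hasDerivAt_pow 4 y
    have h1 : HasDerivAt (fun t : ℝ => 1 - t^2/2 + t^4/24) (-(y) + y^3/6) y := by
      have := ((hasDerivAt_const y (1:ℝ)).sub (h2.div_const 2)).add (h4.div_const 24)
      exact this.congr_deriv (by ring)
    have := h1.sub (Real.hasDerivAt_cos y)
    exact this.congr_deriv (by ring)
  have hmono : MonotoneOn (fun t : ℝ => 1 - t^2/2 + t^4/24 - Real.cos t) (Set.Ici 0) := by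
    apply monotoneOn_of_deriv_nonneg (convex_Ici 0)
      (fun y _ => (hd y).differentiableAt.continuousAt.continuousWithinAt)
      (fun y _ => (hd y).differentiableAt.differentiableWithinAt)
    intro y hy
    rw [interior_Ici] at hy
    rw [(hd y).deriv]
    have := aux_sin_ge_sub_cube (le_of_lt hy)
    linarith
  have h0 := hmono Set.self_mem_Ici (Set.mem_Ici.mpr hx) hx
  simp at h0
  linarith

private lemma aux_sin_le_quintic {x : ℝ} (hx : 0 ≤ x) :
    Real.sin x ≤ x - x^3/6 + x^5/120 := by
  have hd : ∀ y : ℝ, HasDerivAt (fun t : ℝ => t - t^3/6 + t^5/120 - Real.sin t)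
      (1 - y^2/2 + y^4/24 - Real.cos y) y := by
    intro y
    have h3 : HasDerivAt (fun t : ℝ => t^3) (3*y^2) y := by
      simpa using hasDerivAt_pow 3 y
    have h5 : HasDerivAt (fun t : ℝ => t^5) (5*y^4) y := by
      simpa using hasDerivAt_pow 5 y
    have h1 : HasDerivAt (fun t : ℝ => t - t^3/6 + t^5/120) (1 - y^2/2 + y^4/24) y := by
      have := ((hasDerivAt_id y).sub (h3.div_const 6)).add (h5.div_const 120)
      exact this.congr_deriv (by ring)
    exact h1.sub (Real.hasDerivAt_sin y)
  have hmono : MonotoneOn (fun t : ℝ => t - t^3/6 + t^5/120 - Real.sin t) (Set.Ici 0) := by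
    apply monotoneOn_of_deriv_nonneg (convex_Ici 0)
      (fun y _ => (hd y).differentiableAt.continuousAt.continuousWithinAt)
      (fun y _ => (hd y).differentiableAt.differentiableWithinAt)
    intro y hy
    rw [interior_Ici] at hy
    rw [(hd y).deriv]
    have := aux_cos_le_quartic (le_of_lt hy)
    linarith
  have h0 := hmono Set.self_mem_Ici (Set.mem_Ici.mpr hx) hx
  simp at h0
  linarith

private lemma aux_keyG {a b : ℝ} (ha : 0 ≤ a) (hab : 9*a ≤ b) (hb : b ≤ 167/100) :
    (1 - b/6 + b^2/120)^2 * (3 - 3*a + b) ≤ (1 - a/6)^2 * (3 - 2*a) := by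
  nlinarith [sq_nonneg b, sq_nonneg (b - 9*a), mul_nonneg ha (sub_nonneg.2 hb),
    mul_nonneg (sub_nonneg.2 hab) (sub_nonneg.2 hb), sq_nonneg (b*b), sq_nonneg a,
    mul_nonneg (mul_nonneg ha ha) ha, sq_nonneg (a*b),
    mul_nonneg (mul_nonneg (sub_nonneg.2 hab) (sub_nonneg.2 hb)) (sub_nonneg.2 hb),
    mul_nonneg (mul_nonneg ha (sub_nonneg.2 hb)) (sub_nonneg.2 hb)]

set_option maxHeartbeats 1000000 in
private lemma aux_crux (n : ℕ) (hn : 1 ≤ n) {φ : ℝ} (h0 : 0 ≤ φ) (h2 : φ ≤ π/2) :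
    Real.sin ((n:ℝ)*φ)^2 * (3 + ((n:ℝ)^2 - 3) * Real.sin φ^2)
      ≤ (n:ℝ)^2 * Real.sin φ^2 * (3 - 2 * Real.sin φ^2) := by
  have hπ : (3:ℝ) < π := Real.pi_gt_three
  have hπ' : π < 3.15 := Real.pi_lt_d2
  have hφπ : φ ≤ π := by linarith
  have hs0 : 0 ≤ Real.sin φ := Real.sin_nonneg_of_nonneg_of_le_pi h0 hφπ
  have hs1 : Real.sin φ ≤ 1 := Real.sin_le_one φ
  set s := Real.sin φ with hsdef
  match n, hn with
  | 1, _ =>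
    norm_num
    nlinarith only [sq_nonneg s]
  | 2, _ =>
    have h2m : Real.sin ((2:ℕ)*φ) = 2 * s * Real.cos φ := by
      push_cast
      rw [← Real.sin_two_mul]
    have hpyth : s^2 + Real.cos φ^2 = 1 := Real.sin_sq_add_cos_sq φ
    push_cast
    push_cast at h2m
    rw [h2m]
    nlinarith only [hpyth, sq_nonneg s, sq_nonneg (s^3), sq_nonneg (s^2)]
  | (m+3), _ =>
    set n' : ℕ := m + 3 with hn'def
    have hn3 : (3:ℝ) ≤ (n':ℝ) := by
      have : (3:ℕ) ≤ n' := by omega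
      exact_mod_cast this
    have hnn0 : (0:ℝ) ≤ (n':ℝ) := by linarith
    have h9 : (9:ℝ) ≤ (n':ℝ)^2 := by
      nlinarith only [mul_le_mul hn3 hn3 (by norm_num : (0:ℝ) ≤ 3) hnn0]
    have hn'3 : (0:ℝ) ≤ (n':ℝ)^2 - 3 := by linarith
    by_cases hcase : 3 ≤ 2*(n':ℝ)^2 * s^2
    · -- easy case
      have hZ1 : Real.sin ((n':ℝ)*φ)^2 ≤ 1 := Real.sin_sq_le_one _
      have hfac : 0 ≤ 3 + ((n':ℝ)^2 - 3) * s^2 := by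
        nlinarith only [mul_nonneg hn'3 (sq_nonneg s)]
      have h1 : Real.sin ((n':ℝ)*φ)^2 * (3 + ((n':ℝ)^2 - 3) * s^2)
          ≤ 3 + ((n':ℝ)^2 - 3) * s^2 := by
        nlinarith only [mul_nonneg (by linarith : (0:ℝ) ≤ 1 - Real.sin ((n':ℝ)*φ)^2) hfac]
      have h2' : 3 + ((n':ℝ)^2 - 3) * s^2 ≤ (n':ℝ)^2 * s^2 * (3 - 2*s^2) := by
        nlinarith only [mul_nonneg (by nlinarith only [hs1, hs0] : (0:ℝ) ≤ 1 - s^2)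
          (by linarith : (0:ℝ) ≤ 2*(n':ℝ)^2 * s^2 - 3)]
      linarith
    · -- hard case
      push_neg at hcase
      have hs16 : s^2 ≤ 1/6 := by
        nlinarith only [hcase, mul_nonneg (by linarith : (0:ℝ) ≤ (n':ℝ)^2 - 9) (sq_nonneg s)]
      have hφ6 : φ ≤ π/6 := by
        by_contra hcon
        push_neg at hcon
        have hlt : Real.sin (π/6) < s := by
          apply Real.sin_lt_sin_of_lt_of_le_pi_div_two (by linarith) h2 hcon
        rw [Real.sin_pi_div_six] at hlt
        nlinarith only [hlt, hs16]
      have hφu : φ ≤ 21/40 := by linarith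
      set w : ℝ := (n':ℝ)*φ with hwdef
      have hw0 : 0 ≤ w := by positivity
      have hslx : φ - φ^3/6 ≤ s := aux_sin_ge_sub_cube h0
      have hsφ : s ≤ φ := Real.sin_le h0
      have hφsq : φ^2 ≤ 441/1600 := by nlinarith only [hφu, h0]
      have hsl0 : 0 ≤ φ - φ^3/6 := by
        nlinarith only [mul_le_mul_of_nonneg_left hφsq h0, h0]
      have hns : ((n':ℝ)*s)^2 ≤ 3/2 := by nlinarith only [hcase]
      have hB0 : (n':ℝ)*(φ - φ^3/6) ≤ (n':ℝ)*s := mul_le_mul_of_nonneg_left hslx hnn0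
      have hB1 : 0 ≤ (n':ℝ)*(φ - φ^3/6) := mul_nonneg hnn0 hsl0
      have hnsl : ((n':ℝ)*(φ - φ^3/6))^2 ≤ 3/2 := by
        have h := pow_le_pow_left₀ hB1 hB0 2
        nlinarith only [h, hns]
      have h477 : (477/500:ℝ) ≤ 1 - φ^2/6 := by linarith
      have hEqw : w^2*(1 - φ^2/6)^2 = ((n':ℝ)*(φ - φ^3/6))^2 := by
        rw [hwdef]; ring
      have h477sq : ((477:ℝ)/500)^2 ≤ (1 - φ^2/6)^2 :=
        pow_le_pow_left₀ (by norm_num) h477 2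
      have hws : w^2*((477:ℝ)/500)^2 ≤ w^2*(1 - φ^2/6)^2 :=
        mul_le_mul_of_nonneg_left h477sq (sq_nonneg w)
      have hwsq : w^2 ≤ 167/100 := by
        rw [hEqw] at hws
        linarith only [hws, hnsl]
      have hw13 : w ≤ 13/10 := by
        nlinarith only [sq_nonneg (w - 13/10), hwsq, hw0]
      have hwπ : w ≤ π := by linarith
      have hZ0 : 0 ≤ Real.sin w := Real.sin_nonneg_of_nonneg_of_le_pi hw0 hwπ
      have hZu : Real.sin w ≤ w - w^3/6 + w^5/120 := aux_sin_le_quintic hw0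
      have hZsq : Real.sin w^2 ≤ (w - w^3/6 + w^5/120)^2 := by
        have := pow_le_pow_left₀ hZ0 hZu 2
        simpa using this
      have hab9 : 9*φ^2 ≤ w^2 := by
        rw [hwdef]
        nlinarith only [mul_le_mul_of_nonneg_right h9 (sq_nonneg φ)]
      have hkey : (1 - w^2/6 + (w^2)^2/120)^2 * (3 - 3*φ^2 + w^2)
          ≤ (1 - φ^2/6)^2 * (3 - 2*φ^2) :=
        aux_keyG (sq_nonneg φ) hab9 hwsq
      -- step 1
      have hfac2 : 0 ≤ 3 + ((n':ℝ)^2 - 3) * s^2 := by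
        nlinarith only [mul_nonneg hn'3 (sq_nonneg s)]
      have hsφ2 : s^2 ≤ φ^2 := pow_le_pow_left₀ hs0 hsφ 2
      have hstep1 : Real.sin w^2 * (3 + ((n':ℝ)^2 - 3) * s^2)
          ≤ (w - w^3/6 + w^5/120)^2 * (3 - 3*φ^2 + w^2) := by
        have hss : 3 + ((n':ℝ)^2 - 3) * s^2 ≤ 3 - 3*φ^2 + w^2 := by
          have h1 := mul_le_mul_of_nonneg_left hsφ2 hn'3
          have h2 : w^2 = (n':ℝ)^2*φ^2 := by rw [hwdef]; ring
          linarith only [h1, h2]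
        exact mul_le_mul hZsq hss hfac2 (sq_nonneg _)
      -- step 2
      have hstep2 : (w - w^3/6 + w^5/120)^2 * (3 - 3*φ^2 + w^2)
          ≤ w^2 * ((1 - φ^2/6)^2 * (3 - 2*φ^2)) := by
        have h1 : (w - w^3/6 + w^5/120)^2
            = w^2 * (1 - w^2/6 + (w^2)^2/120)^2 := by ring
        rw [h1, mul_assoc]
        exact mul_le_mul_of_nonneg_left hkey (sq_nonneg w)
      -- step 3
      have hstep3 : w^2 * ((1 - φ^2/6)^2 * (3 - 2*φ^2))
          ≤ (n':ℝ)^2 * s^2 * (3 - 2*s^2) := by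
        have hB : ((n':ℝ)*(φ - φ^3/6))^2 ≤ (n':ℝ)^2 * s^2 := by
          have h := pow_le_pow_left₀ hB1 hB0 2
          nlinarith only [h]
        have hC : 3 - 2*φ^2 ≤ 3 - 2*s^2 := by linarith only [hsφ2]
        have hDD : 0 ≤ 3 - 2*φ^2 := by linarith only [hφsq]
        calc w^2 * ((1 - φ^2/6)^2 * (3 - 2*φ^2))
            = ((n':ℝ)*(φ - φ^3/6))^2 * (3 - 2*φ^2) := by rw [hwdef]; ring
          _ ≤ ((n':ℝ)^2 * s^2) * (3 - 2*φ^2) := mul_le_mul_of_nonneg_right hB hDD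
          _ ≤ ((n':ℝ)^2 * s^2) * (3 - 2*s^2) := by
              apply mul_le_mul_of_nonneg_left hC
              positivity
          _ = (n':ℝ)^2 * s^2 * (3 - 2*s^2) := by ring
      calc Real.sin ((n':ℝ)*φ)^2 * (3 + ((n':ℝ)^2 - 3) * s^2)
          ≤ (w - w^3/6 + w^5/120)^2 * (3 - 3*φ^2 + w^2) := hstep1
        _ ≤ w^2 * ((1 - φ^2/6)^2 * (3 - 2*φ^2)) := hstep2
        _ ≤ (n':ℝ)^2 * s^2 * (3 - 2*s^2) := hstep3

theorem stmt9 (x : ℝ) (hx1 : -1 ≤ x) (hx2 : x ≤ 1) (n : ℕ) (hn : 1 ≤ n) :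
    (Polynomial.Chebyshev.T ℝ n).eval x
      ≥ (-(n : ℝ) ^ 2 * (1 - x) * (2 * x + 3) + 3 * (1 + x))
          / ((n : ℝ) ^ 2 * (1 - x) + 3 * (1 + x)) := by
  have hn1 : (1:ℝ) ≤ (n:ℝ) := by exact_mod_cast hn
  set θ := Real.arccos x with hθdef
  have hθ1 : 0 ≤ θ := Real.arccos_nonneg x
  have hθ2 : θ ≤ π := Real.arccos_le_pi x
  have hcos : Real.cos θ = x := Real.cos_arccos hx1 hx2
  have hT : (Polynomial.Chebyshev.T ℝ n).eval x = Real.cos ((n:ℝ) * θ) := by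
    rw [← hcos]
    have := Polynomial.Chebyshev.T_real_cos θ (n : ℤ)
    push_cast at this ⊢
    exact this
  set φ := θ/2 with hφdef
  have hφ0 : 0 ≤ φ := by positivity
  have hφ2 : φ ≤ π/2 := by rw [hφdef]; linarith
  set s := Real.sin φ with hsdef
  set Z := Real.sin ((n:ℝ)*φ) with hZdef
  have hxs : x = 1 - 2*s^2 := by
    have h1 : θ = 2*φ := by rw [hφdef]; ring
    have h2 : Real.cos (2*φ) = 2*Real.cos φ^2 - 1 := Real.cos_two_mul φ
    have h3 : s^2 + Real.cos φ^2 = 1 := Real.sin_sq_add_cos_sq φ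
    rw [← hcos, h1, h2]
    linarith
  have hTz : (Polynomial.Chebyshev.T ℝ n).eval x = 1 - 2*Z^2 := by
    rw [hT]
    have h1 : (n:ℝ)*θ = 2*((n:ℝ)*φ) := by rw [hφdef]; ring
    have h2 : Real.cos (2*((n:ℝ)*φ)) = 2*Real.cos ((n:ℝ)*φ)^2 - 1 :=
      Real.cos_two_mul _
    have h3 : Z^2 + Real.cos ((n:ℝ)*φ)^2 = 1 := Real.sin_sq_add_cos_sq _
    rw [h1, h2]
    linarith
  have hcrux := aux_crux n hn hφ0 hφ2
  rw [← hsdef, ← hZdef] at hcrux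
  have hn2 : (1:ℝ) ≤ (n:ℝ)^2 := by nlinarith
  have hD : 0 < (n : ℝ) ^ 2 * (1 - x) + 3 * (1 + x) := by
    nlinarith [mul_le_mul_of_nonneg_right hn2 (by linarith : (0:ℝ) ≤ 1 - x)]
  rw [ge_iff_le, div_le_iff₀ hD, hTz, hxs]
  nlinarith only [hcrux]
end

section
/- For all real r > 0 and all real b ≥ 2, (1 - r^{b+1})(1 - r^{b-1}) / (r^{b-1}(b²-1)(1-r)²) ≥ (1 + r^{b/3})(1 + r^b) / (2(r^{b/3} + r^b)), where for r = 1 the left side is interpreted as its limit (b+1)(b-1)/(b²-1) = 1. -/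
open Real Set

private lemma nonneg_of_deriv {f f' : ℝ → ℝ} (hd : ∀ t, HasDerivAt f (f' t) t)
    (h0 : f 0 = 0) (hf' : ∀ t, 0 ≤ t → 0 ≤ f' t) {x : ℝ} (hx : 0 ≤ x) : 0 ≤ f x := by
  have hm : MonotoneOn f (Set.Ici 0) :=
    monotoneOn_of_deriv_nonneg (convex_Ici 0)
      (fun t _ => (hd t).continuousAt.continuousWithinAt)
      (fun t _ => (hd t).differentiableAt.differentiableWithinAt)
      (fun t ht => by
        rw [(hd t).deriv]
        exact hf' t (le_of_lt (by simpa [interior_Ici] using ht)))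
  have := hm (self_mem_Ici (a := (0:ℝ))) (mem_Ici.2 hx) hx
  rwa [h0] at this

private lemma sinh_ge_self {x : ℝ} (hx : 0 ≤ x) : x ≤ sinh x := by
  have h := nonneg_of_deriv (f := fun t => sinh t - t) (f' := fun t => cosh t - 1)
    (fun t => ((Real.hasDerivAt_sinh t).sub (hasDerivAt_id t)))
    (by simp) (fun t _ => by nlinarith [Real.one_le_cosh t]) hx
  linarith

private lemma cosh_ge_quad {x : ℝ} (hx : 0 ≤ x) : 1 + x^2/2 ≤ cosh x := by
  have h := nonneg_of_deriv (f := fun t => cosh t - (1 + t^2/2)) (f' := fun t => sinh t - t)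
    (fun t => ((Real.hasDerivAt_cosh t).sub ((((hasDerivAt_id t).pow 2).div_const 2).const_add 1)).congr_deriv
      (by simp only [id_eq]; ring))
    (by simp) (fun t ht => by linarith [sinh_ge_self ht]) hx
  linarith

private lemma sinh_ge_cubic {x : ℝ} (hx : 0 ≤ x) : x + x^3/6 ≤ sinh x := by
  have h := nonneg_of_deriv (f := fun t => sinh t - (t + t^3/6)) (f' := fun t => cosh t - (1 + t^2/2))
    (fun t => ((Real.hasDerivAt_sinh t).sub ((hasDerivAt_id t).add (((hasDerivAt_id t).pow 3).div_const 6))).congr_deriv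
      (by simp only [id_eq]; ring))
    (by simp) (fun t ht => by linarith [cosh_ge_quad ht]) hx
  linarith

private lemma sinh_le_mul_cosh {x : ℝ} (hx : 0 ≤ x) : sinh x ≤ x * cosh x := by
  have h := nonneg_of_deriv (f := fun t => t * cosh t - sinh t) (f' := fun t => t * sinh t)
    (fun t => (((hasDerivAt_id t).mul (Real.hasDerivAt_cosh t)).sub (Real.hasDerivAt_sinh t)).congr_deriv
      (by simp only [id_eq]; ring))
    (by simp) (fun t ht => by exact mul_nonneg ht (by rw [← Real.sinh_zero]; exact Real.sinh_le_sinh.2 ht)) hx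
  linarith

-- L2 : sinh x ^ 3 ≥ x^3 cosh x
private lemma cube_sinh_ge {x : ℝ} (hx : 0 ≤ x) : x^3 * cosh x ≤ sinh x ^ 3 := by
  have h := nonneg_of_deriv (f := fun t => sinh t ^ 3 - t^3 * cosh t)
      (f' := fun t => 3 * sinh t ^ 2 * cosh t - (3*t^2 * cosh t + t^3 * sinh t))
    (fun t => ((((Real.hasDerivAt_sinh t).pow 3).sub (((hasDerivAt_id t).pow 3).mul (Real.hasDerivAt_cosh t))).congr_deriv
      (by simp only [id_eq, Pi.pow_apply]; ring)))
    (by simp) (fun t ht => by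
      have h3 := sinh_ge_cubic ht
      have h4 := sinh_le_mul_cosh ht
      have hc := Real.one_le_cosh t
      have hs : 0 ≤ sinh t := by rw [← Real.sinh_zero]; exact Real.sinh_le_sinh.2 ht
      have hsq : t^2 + t^4/3 ≤ sinh t ^ 2 := by
        nlinarith [mul_le_mul h3 h3 (by positivity) hs, pow_nonneg ht 6]
      have e1 : 3*cosh t*(t^2 + t^4/3) ≤ 3*cosh t*(sinh t^2) :=
        mul_le_mul_of_nonneg_left hsq (by positivity)
      have e2 : t^3*sinh t ≤ t^3*(t*cosh t) :=
        mul_le_mul_of_nonneg_left h4 (by positivity)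
      nlinarith [e1, e2]) hx
  linarith

-- L3 : sinh (3x) ≤ 3 x cosh x ^ 3
private lemma sinh_three_le {x : ℝ} (hx : 0 ≤ x) : sinh (3*x) ≤ 3 * x * cosh x ^ 3 := by
  have h := nonneg_of_deriv (f := fun t => 3 * t * cosh t ^ 3 - sinh (3*t))
      (f' := fun t => 3 * cosh t ^ 3 + 9 * t * cosh t ^ 2 * sinh t - 3 * cosh (3*t))
    (fun t => (((((hasDerivAt_id t).const_mul 3).mul ((Real.hasDerivAt_cosh t).pow 3)).sub
        (((hasDerivAt_id t).const_mul 3).sinh)).congr_deriv (by simp only [id_eq, Pi.pow_apply]; ring)))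
    (by simp) (fun t ht => by
      rw [Real.cosh_three_mul]
      have h4 := sinh_le_mul_cosh ht
      have hc := Real.one_le_cosh t
      have hs : 0 ≤ sinh t := by rw [← Real.sinh_zero]; exact Real.sinh_le_sinh.2 ht
      nlinarith [Real.cosh_sq t, mul_nonneg (mul_nonneg (Real.cosh_pos t).le hs) (sub_nonneg.2 h4)]) hx
  linarith


noncomputable def psi (t : ℝ) : ℝ := cosh t / sinh t - 1 / t
noncomputable def psid (t : ℝ) : ℝ := 1 / t^2 - 1 / sinh t ^ 2

private lemma sinh_pos' {t : ℝ} (ht : 0 < t) : 0 < sinh t := by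
  rw [← Real.sinh_zero]; exact Real.sinh_lt_sinh.2 ht

private lemma hasDerivAt_psi {t : ℝ} (ht : 0 < t) : HasDerivAt psi (psid t) t := by
  have hs := sinh_pos' ht
  have hc := Real.cosh_sq_sub_sinh_sq t
  have e1 : sinh t * sinh t - cosh t * cosh t = -1 := by linear_combination (-1 : ℝ) * hc
  have h1 : HasDerivAt (fun t => cosh t / sinh t - 1 / t)
      ((sinh t * sinh t - cosh t * cosh t) / sinh t ^ 2 - (0 * t - 1 * 1) / t ^ 2) t :=
    ((Real.hasDerivAt_cosh t).div (Real.hasDerivAt_sinh t) hs.ne').sub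
      ((hasDerivAt_const t 1).div (hasDerivAt_id t) ht.ne')
  have h2 : (sinh t * sinh t - cosh t * cosh t) / sinh t ^ 2 - (0 * t - 1 * 1) / t ^ 2 = psid t := by
    rw [e1, psid]; ring
  rw [← h2]; exact h1

private lemma hasDerivAt_psid {t : ℝ} (ht : 0 < t) :
    HasDerivAt psid (2 * cosh t / sinh t ^ 3 - 2 / t^3) t := by
  have hs := sinh_pos' ht
  have A : HasDerivAt (fun x : ℝ => 1 / x^2) ((0 * t^2 - 1 * (2*t^(2-1))) / (t^2)^2) t :=
    (hasDerivAt_const t 1).div (hasDerivAt_pow 2 t) (by positivity)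
  have B : HasDerivAt (fun x : ℝ => 1 / sinh x ^ 2)
      ((0 * sinh t^2 - 1 * (2 * sinh t ^(2-1) * cosh t)) / (sinh t^2)^2) t :=
    (hasDerivAt_const t 1).div ((Real.hasDerivAt_sinh t).pow 2) (by positivity)
  exact (A.sub B).congr_deriv (by field_simp; ring)

private lemma psid_antitone : AntitoneOn psid (Ioi 0) := by
  apply antitoneOn_of_deriv_nonpos (convex_Ioi 0)
  · exact fun t ht => (hasDerivAt_psid ht).continuousAt.continuousWithinAt
  · intro t ht
    rw [interior_Ioi] at ht
    exact (hasDerivAt_psid ht).differentiableAt.differentiableWithinAt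
  · intro t ht
    rw [interior_Ioi] at ht
    have ht' : (0:ℝ) < t := ht
    rw [(hasDerivAt_psid ht').deriv]
    have hs := sinh_pos' ht'
    have hL2 := cube_sinh_ge ht'.le
    have h3 : 2 * cosh t / sinh t ^ 3 ≤ 2 / t^3 := by
      rw [div_le_div_iff₀ (by positivity) (by positivity)]
      nlinarith [hL2]
    linarith

private lemma psi_three {u : ℝ} (hu : 0 < u) : psi (3*u) ≤ 3 * psi u := by
  have hs := sinh_pos' hu
  have hs3 := sinh_pos' (by linarith : (0:ℝ) < 3*u)
  have hc2 : cosh u ^ 2 = sinh u ^ 2 + 1 := Real.cosh_sq u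
  have hS3 : sinh (3*u) = 4 * sinh u ^ 3 + 3 * sinh u := Real.sinh_three_mul u
  have hC3 : cosh (3*u) = cosh u * (4 * sinh u ^ 2 + 1) := by
    rw [Real.cosh_three_mul]; linear_combination (4 * cosh u) * hc2
  have key : sinh (3*u) ≤ 3 * u * cosh u ^ 3 := sinh_three_le hu.le
  have key2 : 4 * sinh u ^ 3 + 3 * sinh u ≤ 3 * u * cosh u * (sinh u ^ 2 + 1) := by
    have h : 3 * u * cosh u ^ 3 = 3 * u * cosh u * (sinh u ^ 2 + 1) := by
      linear_combination (3 * u * cosh u) * hc2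
    rw [← h, ← hS3]; exact key
  rw [psi, psi]
  rw [div_sub_div _ _ hs3.ne' (by positivity : (3*u) ≠ 0)]
  have h2 : 3 * (cosh u / sinh u - 1 / u) = (3 * cosh u * u - 3 * sinh u) / (sinh u * u) := by
    field_simp
  rw [h2, div_le_div_iff₀ (by positivity) (by positivity)]
  rw [hS3, hC3]
  nlinarith [mul_nonneg hs.le (sub_nonneg.2 key2), mul_pos hu hs, mul_pos hu hs3]

private lemma psi_key {u q : ℝ} (hu : 0 < u) (huq : u ≤ q) : psi (q + 2*u) ≤ psi q + 2 * psi u := by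
  have hH : AntitoneOn (fun x => psi (x + 2*u) - psi x) (Ici u) := by
    have hder : ∀ x : ℝ, 0 < x → HasDerivAt (fun x => psi (x + 2*u) - psi x)
        (psid (x + 2*u) * 1 - psid x) x := by
      intro x hx
      exact (HasDerivAt.comp x (hasDerivAt_psi (t := x + 2*u) (by linarith))
        ((hasDerivAt_id x).add_const (2*u))).sub (hasDerivAt_psi hx)
    apply antitoneOn_of_deriv_nonpos (convex_Ici u)
    · intro x hx
      exact (hder x (lt_of_lt_of_le hu hx)).continuousAt.continuousWithinAt
    · intro x hx
      rw [interior_Ici] at hx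
      exact (hder x (hu.trans hx)).differentiableAt.differentiableWithinAt
    · intro x hx
      rw [interior_Ici] at hx
      have hx0 : 0 < x := hu.trans hx
      rw [(hder x hx0).deriv]
      have := psid_antitone (mem_Ioi.2 hx0) (mem_Ioi.2 (by linarith : (0:ℝ) < x + 2*u)) (by linarith)
      linarith
  have h1 := hH (self_mem_Ici) (mem_Ici.2 huq) huq
  dsimp only at h1
  rw [show u + 2*u = 3*u by ring] at h1
  have h3 := psi_three hu
  linarith



noncomputable def FF (v w : ℝ) : ℝ :=
  Real.log (sinh (3*v+w)) + Real.log (sinh (3*v-w)) + 2*Real.log w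
    - Real.log (3*v+w) - Real.log (3*v-w) - 2*Real.log (sinh w)

private lemma hasDerivAt_FF {v w : ℝ} (h1 : 0 < w) (h2 : w < 3*v) :
    HasDerivAt (FF v) (psi (3*v+w) - psi (3*v-w) - 2 * psi w) w := by
  have hp : (0:ℝ) < 3*v+w := by linarith
  have hm : (0:ℝ) < 3*v-w := by linarith
  have d1 := (((hasDerivAt_id w).const_add (3*v)).sinh).log (sinh_pos' hp).ne'
  have d2 := (((hasDerivAt_id w).const_sub (3*v)).sinh).log (sinh_pos' hm).ne'
  have d3 := (Real.hasDerivAt_log h1.ne').const_mul 2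
  have d4 := ((hasDerivAt_id w).const_add (3*v)).log hp.ne'
  have d5 := ((hasDerivAt_id w).const_sub (3*v)).log hm.ne'
  have d6 := ((Real.hasDerivAt_sinh w).log (sinh_pos' h1).ne').const_mul 2
  have D := ((((d1.add d2).add d3).sub d4).sub d5).sub d6
  simp only [id_eq] at D
  refine D.congr_deriv ?_
  have hs := sinh_pos' h1
  simp only [psi]
  field_simp
  ring

private lemma FF_antitone {v : ℝ} (hv : 0 < v) : AntitoneOn (FF v) (Ioc 0 (3*v/2)) := by
  apply antitoneOn_of_deriv_nonpos (convex_Ioc 0 (3*v/2))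
  · intro w hw
    obtain ⟨hw1, hw2⟩ := hw
    exact (hasDerivAt_FF hw1 (by linarith)).continuousAt.continuousWithinAt
  · intro w hw
    rw [interior_Ioc] at hw
    obtain ⟨hw1, hw2⟩ := hw
    exact (hasDerivAt_FF hw1 (by linarith)).differentiableAt.differentiableWithinAt
  · intro w hw
    rw [interior_Ioc] at hw
    obtain ⟨hw1, hw2⟩ := hw
    rw [(hasDerivAt_FF hw1 (by linarith)).deriv]
    have hk := psi_key hw1 (by linarith : w ≤ 3*v - w)
    rw [show 3*v - w + 2*w = 3*v + w by ring] at hk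
    linarith

private lemma exp_FF {v w : ℝ} (h1 : 0 < w) (h2 : w < 3*v) :
    Real.exp (FF v w) = sinh (3*v+w) * sinh (3*v-w) * w^2 / ((3*v+w)*(3*v-w)*sinh w ^ 2) := by
  have hp : (0:ℝ) < 3*v+w := by linarith
  have hm : (0:ℝ) < 3*v-w := by linarith
  have hs := sinh_pos' h1
  have hsp := sinh_pos' hp
  have hsm := sinh_pos' hm
  have e2 : ∀ x : ℝ, 0 < x → Real.exp (2 * Real.log x) = x^2 := by
    intro x hx
    rw [two_mul, Real.exp_add, Real.exp_log hx]; ring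
  rw [FF, Real.exp_sub, Real.exp_sub, Real.exp_sub, Real.exp_add, Real.exp_add,
    Real.exp_log hsp, Real.exp_log hsm, Real.exp_log hp, Real.exp_log hm, e2 w h1,
    e2 (sinh w) hs]
  field_simp

-- the core inequality
private lemma core {v u : ℝ} (hu : 0 < u) (huv : u ≤ 3*v/2) :
    (9*v^2-u^2) * sinh u ^ 2 * cosh v * cosh (3*v) ≤
      sinh (3*v+u) * sinh (3*v-u) * u^2 * cosh (2*v) := by
  have hv : 0 < v := by linarith
  have hu3 : u < 3*v := by linarith
  have hb2 : (0:ℝ) < 3*v/2 := by linarith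
  -- monotonicity step
  have hmono := FF_antitone hv (mem_Ioc.2 ⟨hu, huv⟩) (mem_Ioc.2 ⟨hb2, le_refl _⟩) huv
  have hexp := Real.exp_le_exp.2 hmono
  rw [exp_FF hu hu3, exp_FF hb2 (by linarith)] at hexp
  -- value at the endpoint
  have hs32 := sinh_pos' hb2
  have key3 : ∀ x : ℝ, sinh (3*x) = sinh x * (2 * cosh (2*x) + 1) := by
    intro x
    rw [Real.sinh_three_mul, Real.cosh_two_mul]
    linear_combination (-2 * sinh x) * Real.cosh_sq x
  have e9 : sinh (3*v + 3*v/2) = sinh (3*v/2) * (2 * cosh (3*v) + 1) := by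
    rw [show 3*v + 3*v/2 = 3*(3*v/2) by ring, key3 (3*v/2), show 2*(3*v/2) = 3*v by ring]
  have hval : sinh (3*v+3*v/2) * sinh (3*v-3*v/2) * (3*v/2)^2
      / ((3*v+3*v/2)*(3*v-3*v/2)*sinh (3*v/2) ^ 2) = (2*cosh (3*v)+1)/3 := by
    rw [e9, show 3*v - 3*v/2 = 3*v/2 by ring]
    field_simp
    ring
  rw [hval] at hexp
  -- endpoint vs target
  have hc2 : (0:ℝ) < cosh (2*v) := Real.cosh_pos _
  have hbd : cosh v * cosh (3*v) / cosh (2*v) ≤ (2*cosh (3*v)+1)/3 := by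
    rw [div_le_div_iff₀ hc2 (by norm_num : (0:ℝ) < 3)]
    have hc := Real.one_le_cosh v
    have e3 : cosh (3*v) = 4 * cosh v ^ 3 - 3 * cosh v := Real.cosh_three_mul v
    have e2' : cosh (2*v) = 2 * cosh v ^ 2 - 1 := by
      rw [Real.cosh_two_mul]
      linear_combination (-1 : ℝ) * Real.cosh_sq v
    rw [e3, e2']
    nlinarith [mul_nonneg (sq_nonneg (cosh v - 1))
      (by nlinarith : (0:ℝ) ≤ 16*cosh v^3 + 20*cosh v^2 + 4*cosh v - 1)]
  have hfrac : cosh v * cosh (3*v) / cosh (2*v) ≤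
      sinh (3*v+u) * sinh (3*v-u) * u^2 / ((3*v+u)*(3*v-u)*sinh u ^ 2) := by
    linarith
  rw [div_le_div_iff₀ hc2 (mul_pos (mul_pos (by linarith : (0:ℝ) < 3*v+u)
    (by linarith : (0:ℝ) < 3*v-u)) (pow_pos (sinh_pos' hu) 2))] at hfrac
  nlinarith [hfrac]

private lemma hyp {u b : ℝ} (hu : 0 < u) (hb : 2 ≤ b) :
    (b^2-1) * sinh u ^ 2 * cosh (b/3*u) * cosh (b*u) ≤
      sinh ((b+1)*u) * sinh ((b-1)*u) * cosh (2*(b/3*u)) := by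
  have hbu : 2*u ≤ b*u := by nlinarith
  have hcore := core (v := b/3*u) hu (by linarith [hbu] : u ≤ 3*(b/3*u)/2)
  rw [show 3*(b/3*u)+u = (b+1)*u by ring, show 3*(b/3*u)-u = (b-1)*u by ring,
    show 9*(b/3*u)^2 - u^2 = (b^2-1)*u^2 by ring,
    show (3:ℝ)*(b/3*u) = b*u by ring] at hcore
  refine le_of_mul_le_mul_right ?_ (pow_pos hu 2)
  calc (b^2-1) * sinh u ^ 2 * cosh (b/3*u) * cosh (b*u) * u^2
      = (b^2-1)*u^2 * sinh u ^ 2 * cosh (b/3*u) * cosh (b*u) := by ring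
    _ ≤ sinh ((b+1)*u) * sinh ((b-1)*u) * u^2 * cosh (2*(b/3*u)) := hcore
    _ = sinh ((b+1)*u) * sinh ((b-1)*u) * cosh (2*(b/3*u)) * u^2 := by ring

private lemma hyp' {u b : ℝ} (hu : u ≠ 0) (hb : 2 ≤ b) :
    (b^2-1) * sinh u ^ 2 * cosh (b/3*u) * cosh (b*u) ≤
      sinh ((b+1)*u) * sinh ((b-1)*u) * cosh (2*(b/3*u)) := by
  rcases hu.lt_or_gt with h | h
  · have H := hyp (u := -u) (by linarith) hb
    rw [show (b+1)*-u = -((b+1)*u) by ring, show (b-1)*-u = -((b-1)*u) by ring,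
      show b/3*-u = -(b/3*u) by ring, show b*-u = -(b*u) by ring,
      show (2:ℝ)*-(b/3*u) = -(2*(b/3*u)) by ring] at H
    simp only [Real.sinh_neg, Real.cosh_neg, neg_sq, neg_mul_neg] at H
    linarith [H]
  · exact hyp h hb

theorem stmt10 (r b : ℝ) (hr : 0 < r) (hb : 2 ≤ b) :
    (if r = 1 then (1 : ℝ)
      else (1 - r ^ (b + 1)) * (1 - r ^ (b - 1)) / (r ^ (b - 1) * (b ^ 2 - 1) * (1 - r) ^ 2))
      ≥ (1 + r ^ (b / 3)) * (1 + r ^ b) / (2 * (r ^ (b / 3) + r ^ b)) := by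
  split_ifs with h1
  · subst h1
    simp only [Real.one_rpow]
    norm_num
  · set u : ℝ := -(Real.log r)/2 with hu_def
    have hlog : Real.log r = -(2*u) := by rw [hu_def]; ring
    have hu : u ≠ 0 := by
      intro h
      apply h1
      rw [← Real.exp_log hr, hlog, h]
      norm_num
    have hpow : ∀ s : ℝ, r ^ s = Real.exp (-(2*s*u)) := by
      intro s
      rw [Real.rpow_def_of_pos hr, hlog]
      congr 1
      ring
    have hexp1 : ∀ x : ℝ, Real.exp (-(x*u)) * Real.exp (x*u) = 1 := by
      intro x; rw [← Real.exp_add]; simp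
    have hexp2 : ∀ x : ℝ, Real.exp (-(x*u)) * Real.exp (-(x*u)) = Real.exp (-(2*x*u)) := by
      intro x; rw [← Real.exp_add]; congr 1; ring
    have id_a : ∀ s : ℝ, 1 - r ^ s = 2 * Real.exp (-(s*u)) * sinh (s*u) := by
      intro s
      rw [hpow s, Real.sinh_eq]
      linear_combination hexp2 s - hexp1 s
    have id_b : ∀ s : ℝ, 1 + r ^ s = 2 * Real.exp (-(s*u)) * cosh (s*u) := by
      intro s
      rw [hpow s, Real.cosh_eq]
      linear_combination - hexp2 s - hexp1 s
    have id_a1 : 1 - r = 2 * Real.exp (-u) * sinh u := by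
      have h := id_a 1
      rw [Real.rpow_one] at h
      rw [h]
      norm_num
    have id_c : r ^ (b/3) + r ^ b = 2 * Real.exp (-(4*b/3*u)) * cosh (2*(b/3*u)) := by
      rw [hpow (b/3), hpow b, Real.cosh_eq]
      have h3 : Real.exp (-(4*b/3*u)) * Real.exp (2*(b/3*u)) = Real.exp (-(2*(b/3)*u)) := by
        rw [← Real.exp_add]; congr 1; ring
      have h4 : Real.exp (-(4*b/3*u)) * Real.exp (-(2*(b/3*u))) = Real.exp (-(2*b*u)) := by
        rw [← Real.exp_add]; congr 1; ring
      rw [← h3, ← h4]; ring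
    have hb2 : (0:ℝ) < b^2 - 1 := by nlinarith
    have hsq : (0:ℝ) < (1-r)^2 := by
      have : (1:ℝ) - r ≠ 0 := sub_ne_zero_of_ne fun h => h1 h.symm
      positivity
    have hd1 : (0:ℝ) < r ^ (b-1) * (b^2-1) * (1-r)^2 :=
      mul_pos (mul_pos (Real.rpow_pos_of_pos hr _) hb2) hsq
    have hd2 : (0:ℝ) < 2 * (r ^ (b/3) + r ^ b) := by
      have := Real.rpow_pos_of_pos hr (b/3)
      have := Real.rpow_pos_of_pos hr b
      linarith
    rw [ge_iff_le, div_le_div_iff₀ hd2 hd1]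
    have EL : (1 + r ^ (b / 3)) * (1 + r ^ b) * (r ^ (b - 1) * (b ^ 2 - 1) * (1 - r) ^ 2)
        = 16 * Real.exp (-(10*b/3*u)) *
          ((b^2-1) * sinh u ^ 2 * cosh (b/3*u) * cosh (b*u)) := by
      rw [id_b (b/3), id_b b, id_a1, hpow (b-1)]
      rw [show Real.exp (-(10*b/3*u)) = Real.exp (-(b/3*u)) * Real.exp (-(b*u)) *
          Real.exp (-(2*(b-1)*u)) * Real.exp (-u) * Real.exp (-u) by
        rw [← Real.exp_add, ← Real.exp_add, ← Real.exp_add, ← Real.exp_add]; congr 1; ring]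
      ring
    have ER : (1 - r ^ (b + 1)) * (1 - r ^ (b - 1)) * (2 * (r ^ (b / 3) + r ^ b))
        = 16 * Real.exp (-(10*b/3*u)) *
          (sinh ((b+1)*u) * sinh ((b-1)*u) * cosh (2*(b/3*u))) := by
      rw [id_a (b+1), id_a (b-1), id_c]
      rw [show Real.exp (-(10*b/3*u)) = Real.exp (-((b+1)*u)) * Real.exp (-((b-1)*u)) *
          Real.exp (-(4*b/3*u)) by
        rw [← Real.exp_add, ← Real.exp_add]; congr 1; ring]
      ring
    rw [EL, ER]
    exact mul_le_mul_of_nonneg_left (hyp' hu hb) (by positivity)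
end

section
/- For all real r with 0 < r ≤ 1 and all integers n ≥ 1, ((1-r^n)/(1-r))² ≥ d/dr[(1-r^n)/(1-r)] ≥ (1-r^n)(1-r^{(n-1)/2})/(1-r)², where at r = 1 the quantities are interpreted as limits. -/
open Real Finset

lemma aux_deriv_geom_sum (n : ℕ) (r : ℝ) :
    deriv (fun x : ℝ => ∑ k ∈ Finset.range n, x ^ k) r
      = ∑ k ∈ Finset.range n, (k : ℝ) * r ^ (k - 1) := by
  rw [deriv_fun_sum (fun i _ => differentiableAt_pow i)]
  simp [deriv_pow_field]

lemma aux_sum_formula (m : ℕ) (r : ℝ) :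
    (1 - r) ^ 2 * ∑ k ∈ Finset.range (m + 1), (k : ℝ) * r ^ (k - 1)
      = 1 - (m + 1) * r ^ m + m * r ^ (m + 1) := by
  induction m with
  | zero => simp
  | succ m ih =>
    rw [Finset.sum_range_succ, mul_add, ih]
    push_cast
    ring

lemma aux_sum_pow_ge (t : ℝ) (m : ℕ) :
    (m + 1 : ℝ) * t ^ m ≤ ∑ k ∈ Finset.range (m + 1), t ^ (2 * k) := by
  have hrefl : ∑ k ∈ Finset.range (m + 1), t ^ (2 * ((m + 1) - 1 - k))
      = ∑ k ∈ Finset.range (m + 1), t ^ (2 * k) :=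
    Finset.sum_range_reflect (fun k => t ^ (2 * k)) (m + 1)
  have h2 : ∀ k ∈ Finset.range (m + 1),
      2 * t ^ m ≤ t ^ (2 * k) + t ^ (2 * (m - k)) := by
    intro k hk
    have hk' : k ≤ m := Nat.lt_succ_iff.mp (Finset.mem_range.mp hk)
    have e : t ^ k * t ^ (m - k) = t ^ m := by
      rw [← pow_add, Nat.add_sub_cancel' hk']
    have e1 : t ^ (2 * k) = (t ^ k) ^ 2 := by rw [← pow_mul, mul_comm]
    have e2 : t ^ (2 * (m - k)) = (t ^ (m - k)) ^ 2 := by rw [← pow_mul, mul_comm]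
    nlinarith [sq_nonneg (t ^ k - t ^ (m - k))]
  have hsum : ∑ k ∈ Finset.range (m + 1), (2 * t ^ m)
      ≤ ∑ k ∈ Finset.range (m + 1), (t ^ (2 * k) + t ^ (2 * (m - k))) :=
    Finset.sum_le_sum h2
  rw [Finset.sum_add_distrib, Finset.sum_const, Finset.card_range] at hsum
  have h3 : ∑ k ∈ Finset.range (m + 1), t ^ (2 * (m - k))
      = ∑ k ∈ Finset.range (m + 1), t ^ (2 * k) := by
    simpa using hrefl
  rw [h3, nsmul_eq_mul] at hsum
  push_cast at hsum
  linarith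

theorem stmt11 (n : ℕ) (hn : 1 ≤ n) (r : ℝ) (hr0 : 0 < r) (hr1 : r ≤ 1) :
    (if r = 1 then ((n : ℝ) ^ 2)
        else ((1 - r ^ n) / (1 - r)) ^ 2)
      ≥ deriv (fun x : ℝ => ∑ k ∈ Finset.range n, x ^ k) r
    ∧ deriv (fun x : ℝ => ∑ k ∈ Finset.range n, x ^ k) r
      ≥ (if r = 1 then (n : ℝ) * (((n : ℝ) - 1) / 2)
        else (1 - r ^ n) * (1 - r ^ (((n : ℝ) - 1) / 2)) / (1 - r) ^ 2) := by
  obtain ⟨m, rfl⟩ : ∃ m, n = m + 1 := ⟨n - 1, (Nat.succ_pred_eq_of_pos hn).symm⟩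
  rw [aux_deriv_geom_sum]
  set D := ∑ k ∈ Finset.range (m + 1), (k : ℝ) * r ^ (k - 1) with hDdef
  have hD : (1 - r) ^ 2 * D = 1 - (m + 1) * r ^ m + m * r ^ (m + 1) :=
    aux_sum_formula m r
  by_cases h : r = 1
  · subst h
    have hDval : D = (m + 1) * m / 2 := by
      have hg := Finset.sum_range_id_mul_two (m + 1)
      have : D = ∑ k ∈ Finset.range (m + 1), (k : ℝ) := by
        simp [hDdef]
      rw [this]
      have : ((∑ k ∈ Finset.range (m + 1), k : ℕ) : ℝ) * 2 = (m + 1) * m := by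
        exact_mod_cast congrArg (Nat.cast : ℕ → ℝ) hg
      push_cast at this
      linarith
    simp only [if_pos rfl]
    constructor
    · rw [ge_iff_le, hDval]
      push_cast
      nlinarith [sq_nonneg ((m : ℝ) + 1), sq_nonneg ((m : ℝ) - 1)]
    · rw [ge_iff_le, hDval]
      push_cast
      ring_nf
      linarith
  · have hrlt : r < 1 := lt_of_le_of_ne hr1 h
    have hpos : (0 : ℝ) < (1 - r) ^ 2 := pow_pos (by linarith) 2
    simp only [if_neg h]
    -- geometric sum facts
    have hSle : ∑ k ∈ Finset.range (m + 1), r ^ k ≤ (m + 1 : ℝ) := by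
      calc ∑ k ∈ Finset.range (m + 1), r ^ k
          ≤ ∑ _k ∈ Finset.range (m + 1), (1 : ℝ) :=
            Finset.sum_le_sum fun k _ => pow_le_one₀ hr0.le hr1
        _ = (m + 1 : ℝ) := by simp
    have hgeom : (1 - r) * ∑ k ∈ Finset.range (m + 1), r ^ k = 1 - r ^ (m + 1) := by
      have e := geom_sum_mul r (m + 1)
      linear_combination -e
    have hs : 1 - r ^ (m + 1) ≤ (m + 1 : ℝ) * (1 - r) := by
      rw [← hgeom]
      rw [mul_comm ((m : ℝ) + 1) (1 - r)]
      exact mul_le_mul_of_nonneg_left hSle (by linarith)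
    constructor
    · -- upper bound
      rw [ge_iff_le, div_pow, le_div_iff₀ hpos, mul_comm D _, hD]
      have hrm : r ^ (m + 1) ≤ r ^ m :=
        pow_le_pow_of_le_one hr0.le hr1 (Nat.le_succ m)
      have hA0 : (0 : ℝ) ≤ r ^ m := pow_nonneg hr0.le m
      have hB0 : (0 : ℝ) ≤ r ^ (m + 1) := pow_nonneg hr0.le (m + 1)
      have hB1 : r ^ (m + 1) ≤ 1 := pow_le_one₀ hr0.le hr1
      have hBr : r ^ (m + 1) = r ^ m * r := by ring
      nlinarith [mul_le_mul_of_nonneg_left hs hA0,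
        mul_le_mul_of_nonneg_left hrm hB0,
        mul_nonneg hA0 hB0, sq_nonneg (r ^ m - r ^ (m + 1))]
    · -- lower bound
      set t := Real.sqrt r with htdef
      have ht0 : 0 < t := Real.sqrt_pos.2 hr0
      have ht2 : t ^ 2 = r := Real.sq_sqrt hr0.le
      have ht1 : t ≤ 1 := Real.sqrt_le_one.2 hr1
      have hα : r ^ ((((m + 1 : ℕ) : ℝ) - 1) / 2) = t ^ m := by
        have e : ((((m + 1 : ℕ) : ℝ)) - 1) / 2 = (1 / 2 : ℝ) * (m : ℝ) := by
          push_cast; ring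
        rw [e, Real.rpow_mul hr0.le, Real.rpow_natCast, htdef, Real.sqrt_eq_rpow]
      rw [hα, ge_iff_le, div_le_iff₀ hpos, mul_comm D _, hD]
      -- key inequality via t
      have hsum := aux_sum_pow_ge t m
      have hg2 : (1 - t ^ 2) * ∑ k ∈ Finset.range (m + 1), t ^ (2 * k)
          = 1 - t ^ (2 * (m + 1)) := by
        have e := geom_sum_mul (t ^ 2) (m + 1)
        simp only [← pow_mul] at e
        have e2 : ∀ k, (t ^ 2) ^ k = t ^ (2 * k) := fun k => by
          rw [← pow_mul]
        calc (1 - t ^ 2) * ∑ k ∈ Finset.range (m + 1), t ^ (2 * k)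
            = (1 - t ^ 2) * ∑ k ∈ Finset.range (m + 1), (t ^ 2) ^ k := by
              congr 1
              exact (Finset.sum_congr rfl fun k _ => e2 k).symm
          _ = 1 - (t ^ 2) ^ (m + 1) := by
              have := geom_sum_mul (t ^ 2) (m + 1)
              linear_combination -this
          _ = 1 - t ^ (2 * (m + 1)) := by rw [e2]
      have ht2pos : 0 ≤ 1 - t ^ 2 := by nlinarith
      have hkey : ((m : ℝ) + 1) * t ^ m * (1 - t ^ 2) ≤ 1 - t ^ (2 * (m + 1)) := by
        rw [← hg2]
        rw [mul_comm (((m : ℝ) + 1) * t ^ m) (1 - t ^ 2)]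
        exact mul_le_mul_of_nonneg_left hsum ht2pos
      have ha0 : (0 : ℝ) ≤ t ^ m := pow_nonneg ht0.le m
      have e1 : r ^ m = (t ^ m) ^ 2 := by rw [← ht2]; ring
      have e2 : r ^ (m + 1) = (t ^ m) ^ 2 * t ^ 2 := by rw [← ht2]; ring
      have e3 : t ^ (2 * (m + 1)) = (t ^ m) ^ 2 * t ^ 2 := by ring
      rw [e3] at hkey
      rw [e1, e2]
      push_cast
      nlinarith [mul_le_mul_of_nonneg_left hkey ha0]
end

section
/- For all real r with 0 < r ≤ 1 and all positive reals a ≤ b, r^{(b-a)/2} · (1 - r^a)/(1 - r^b) ≤ a/b, where at r = 1 the quotient is interpreted as its limit a/b. -/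
open Real

lemma convexOn_sinh' : ConvexOn ℝ (Set.Ici 0) Real.sinh := by
  apply convexOn_of_hasDerivWithinAt2_nonneg (convex_Ici 0)
    Real.continuous_sinh.continuousOn (f' := Real.cosh) (f'' := Real.sinh)
  · intro x hx
    exact (Real.hasDerivAt_sinh x).hasDerivWithinAt
  · intro x hx
    exact (Real.hasDerivAt_cosh x).hasDerivWithinAt
  · intro x hx
    simp only [interior_Ici, Set.mem_Ioi] at hx
    exact (Real.sinh_pos_iff.2 hx).le

lemma key_s12 {x y : ℝ} (hx : 0 < x) (hxy : x ≤ y) : y * Real.sinh x ≤ x * Real.sinh y := by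
  have hy : 0 < y := hx.trans_le hxy
  have h := convexOn_sinh'.2 (Set.mem_Ici.2 hy.le) (Set.self_mem_Ici (a := (0:ℝ)))
    (show (0:ℝ) ≤ x / y by positivity)
    (show (0:ℝ) ≤ 1 - x / y by nlinarith [div_le_one_of_le₀ hxy hy.le])
    (by ring)
  simp only [smul_eq_mul, mul_zero, add_zero, Real.sinh_zero] at h
  have h2 : x / y * y = x := by field_simp
  rw [h2] at h
  have := mul_le_mul_of_nonneg_left h hy.le
  calc y * Real.sinh x ≤ y * (x / y * Real.sinh y) := this
    _ = x * Real.sinh y := by field_simp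

lemma key' {x y : ℝ} (hx : 0 < x) (hxy : x ≤ y) :
    y * (Real.exp x - (Real.exp x)⁻¹) ≤ x * (Real.exp y - (Real.exp y)⁻¹) := by
  have h := key_s12 hx hxy
  rw [Real.sinh_eq, Real.sinh_eq, Real.exp_neg, Real.exp_neg] at h
  nlinarith [h]

theorem stmt12 (r a b : ℝ) (hr0 : 0 < r) (hr1 : r ≤ 1) (ha : 0 < a) (hab : a ≤ b) :
    (if r = 1 then a / b
      else r ^ ((b - a) / 2) * (1 - r ^ a) / (1 - r ^ b)) ≤ a / b := by
  have hb : 0 < b := ha.trans_le hab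
  split_ifs with h1
  · exact le_refl _
  · have hrlt : r < 1 := lt_of_le_of_ne hr1 h1
    have hL : Real.log r < 0 := Real.log_neg hr0 hrlt
    rw [Real.rpow_def_of_pos hr0, Real.rpow_def_of_pos hr0, Real.rpow_def_of_pos hr0]
    set L := Real.log r with hLdef
    set t := -L / 2 with htdef
    have ht : 0 < t := by rw [htdef]; linarith
    have hL2 : L = -2 * t := by rw [htdef]; ring
    have hx : 0 < a * t := by positivity
    have hxy : a * t ≤ b * t := mul_le_mul_of_nonneg_right hab ht.le
    set A := Real.exp (a * t) with hA
    set B := Real.exp (b * t) with hB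
    have hA0 : 0 < A := Real.exp_pos _
    have hB0 : 0 < B := Real.exp_pos _
    have hA1 : 1 < A := by rw [hA]; nlinarith [Real.add_one_le_exp (a * t)]
    have hB1 : 1 < B := by rw [hB]; nlinarith [Real.add_one_le_exp (b * t)]
    have e1 : Real.exp (L * ((b - a) / 2)) = A / B := by
      rw [hA, hB, ← Real.exp_sub]; congr 1; rw [hL2]; ring
    have e2 : Real.exp (L * a) = (A * A)⁻¹ := by
      rw [hA, ← Real.exp_add, ← Real.exp_neg]; congr 1; rw [hL2]; ring
    have e3 : Real.exp (L * b) = (B * B)⁻¹ := by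
      rw [hB, ← Real.exp_add, ← Real.exp_neg]; congr 1; rw [hL2]; ring
    rw [e1, e2, e3]
    have hden : 0 < 1 - (B * B)⁻¹ := by
      have : (B * B)⁻¹ < 1 := by
        rw [inv_lt_one_iff₀]; right; nlinarith
      linarith
    rw [div_le_div_iff₀ hden hb]
    have k := key' hx hxy
    have k2 : b * (A - A⁻¹) ≤ a * (B - B⁻¹) := by
      have : b * (A - A⁻¹) * t ≤ a * (B - B⁻¹) * t := by nlinarith [k]
      exact le_of_mul_le_mul_right this ht
    have lhs_eq : A / B * (1 - (A * A)⁻¹) * b = b * (A - A⁻¹) / B := by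
      field_simp
    have rhs_eq : a * (1 - (B * B)⁻¹) = a * (B - B⁻¹) / B := by
      field_simp
    rw [lhs_eq, rhs_eq]
    gcongr
end

section
/- Let a, b ∈ ℤ⁺ with b ≥ 2, let r ∈ [0,1], and let θ ∈ ℝ. Then Σ_{m=a}^{a+b-1} r^{m-a} sin²(mθ/2) ≥ (1/2)·((1-r^b)/(1-r))·(1 - √((1-2r^b cos(bθ)+r^{2b})/((1-2r cos θ + r²))·((1-r)²/(1-r^b)²))) in the Cauchy–Schwarz form: Σ_{m=a}^{a+b-1} r^{m-a} sin²(mθ/2) ≥ (1/2)·((1-r^b)/(1-r) - √((1-2r^b cos bθ + r^{2b})/(1-2r cos θ + r²))), where at r = 1 or at cos θ = 1 the expressions are interpreted as limits. -/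
open Real Finset

lemma aux_normSq (s t : ℝ) :
    Complex.normSq ((s : ℂ) * Complex.exp ((t : ℝ) * Complex.I) - 1)
      = 1 - 2 * s * Real.cos t + s ^ 2 := by
  rw [Complex.exp_mul_I]
  simp [Complex.normSq_apply, Complex.cos_ofReal_re, Complex.sin_ofReal_re]
  nlinarith [Real.sin_sq_add_cos_sq t]

theorem stmt14 (a b : ℕ) (ha : 1 ≤ a) (hb : 2 ≤ b) (r θ : ℝ) (hr0 : 0 ≤ r) (hr1 : r ≤ 1) :
    ∑ m ∈ Finset.Icc a (a + b - 1), r ^ (m - a) * Real.sin (m * θ / 2) ^ 2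
      ≥ (1 / 2) *
        ((if r = 1 then (b : ℝ) else (1 - r ^ b) / (1 - r))
          - (if 1 - 2 * r * Real.cos θ + r ^ 2 = 0 then (b : ℝ)
             else Real.sqrt ((1 - 2 * r ^ b * Real.cos (b * θ) + r ^ (2 * b))
                    / (1 - 2 * r * Real.cos θ + r ^ 2)))) := by
  by_cases hden : 1 - 2 * r * Real.cos θ + r ^ 2 = 0
  · -- degenerate case: r = 1, cos θ = 1
    have hre : r = 1 := by nlinarith [Real.cos_le_one θ, sq_nonneg (1 - r)]
    have hcos : Real.cos θ = 1 := by nlinarith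
    obtain ⟨k, hk⟩ := (Real.cos_eq_one_iff θ).mp hcos
    rw [if_pos hre, if_pos hden]
    have hs : ∀ m ∈ Finset.Icc a (a + b - 1),
        r ^ (m - a) * Real.sin (m * θ / 2) ^ 2 = 0 := by
      intro m _
      have h2 : (m : ℝ) * θ / 2 = ((m * k : ℤ) : ℝ) * π := by
        rw [← hk]; push_cast; ring
      rw [h2, Real.sin_int_mul_pi]; ring
    rw [Finset.sum_eq_zero hs]
    simp
  · -- main case
    have hDpos : 0 < 1 - 2 * r * Real.cos θ + r ^ 2 := by
      rcases lt_or_eq_of_le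
        (by nlinarith [Real.cos_le_one θ, sq_nonneg (1 - r)] :
          (0:ℝ) ≤ 1 - 2 * r * Real.cos θ + r ^ 2) with h | h
      · exact h
      · exact absurd h.symm hden
    set D : ℝ := 1 - 2 * r * Real.cos θ + r ^ 2 with hDdef
    set N : ℝ := 1 - 2 * r ^ b * Real.cos (b * θ) + r ^ (2 * b) with hNdef
    set z : ℂ := (r : ℂ) * Complex.exp ((θ : ℝ) * Complex.I) with hzdef
    -- powers of z
    have hzpow : ∀ m : ℕ, z ^ m
        = ((r ^ m : ℝ) : ℂ) * Complex.exp (((m * θ : ℝ) : ℂ) * Complex.I) := by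
      intro m
      rw [hzdef, mul_pow, ← Complex.exp_nat_mul]
      push_cast
      ring_nf
    -- |z-1|^2 = D, |z^b-1|^2 = N
    have hDnormSq : Complex.normSq (z - 1) = D := aux_normSq r θ
    have hNnormSq : Complex.normSq (z ^ b - 1) = N := by
      rw [hzpow b]
      have := aux_normSq (r ^ b) (b * θ)
      rw [this, hNdef]
      rw [pow_mul, ← pow_mul]
      ring_nf
    have hz1 : z ≠ 1 := by
      intro h
      apply hden
      rw [← hDnormSq, h]
      simp
    have hNnonneg : 0 ≤ N := by rw [← hNnormSq]; exact Complex.normSq_nonneg _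
    -- |∑ z^k| = √(N/D)
    have habsZ : ‖∑ k ∈ Finset.range b, z ^ k‖ = Real.sqrt (N / D) := by
      rw [geom_sum_eq hz1, norm_div, Complex.norm_def, Complex.norm_def,
        hDnormSq, hNnormSq, Real.sqrt_div hNnonneg]
    -- the cosine sum bound
    have hC : (∑ k ∈ Finset.range b, r ^ k * Real.cos ((a + k) * θ))
        ≤ Real.sqrt (N / D) := by
      have hre : (∑ k ∈ Finset.range b, r ^ k * Real.cos ((a + k) * θ))
          = (Complex.exp (((a * θ : ℝ) : ℂ) * Complex.I)
              * ∑ k ∈ Finset.range b, z ^ k).re := by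
        rw [Finset.mul_sum]
        rw [Complex.re_sum]
        apply Finset.sum_congr rfl
        intro k _
        rw [hzpow k, mul_left_comm, ← Complex.exp_add,
          show ((((a : ℕ) : ℝ) * θ : ℝ) : ℂ) * Complex.I + ((((k : ℕ) : ℝ) * θ : ℝ) : ℂ) * Complex.I
              = ((((a : ℝ) + (k : ℝ)) * θ : ℝ) : ℂ) * Complex.I by push_cast; ring,
          Complex.re_ofReal_mul, Complex.exp_ofReal_mul_I_re]
      rw [hre]
      calc (Complex.exp (((a * θ : ℝ) : ℂ) * Complex.I) * ∑ k ∈ Finset.range b, z ^ k).re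
          ≤ ‖Complex.exp (((a * θ : ℝ) : ℂ) * Complex.I)
              * ∑ k ∈ Finset.range b, z ^ k‖ := Complex.re_le_norm _
        _ = Real.sqrt (N / D) := by
            rw [norm_mul, Complex.norm_exp_ofReal_mul_I, one_mul, habsZ]
    -- geometric sum
    have hG : (if r = 1 then (b : ℝ) else (1 - r ^ b) / (1 - r))
        = ∑ k ∈ Finset.range b, r ^ k := by
      by_cases h1 : r = 1
      · rw [if_pos h1, h1]; simp
      · rw [if_neg h1, geom_sum_eq h1]
        have h2 : r - 1 ≠ 0 := sub_ne_zero.mpr h1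
        have h3 : 1 - r ≠ 0 := fun h => h1 (by linarith [sub_eq_zero.mp h])
        rw [div_eq_div_iff h3 h2]
        ring
    -- rewrite LHS
    have hIcc : Finset.Icc a (a + b - 1) = Finset.Ico a (a + b) := by
      rw [← Finset.Ico_add_one_right_eq_Icc]
      congr 1
      omega
    have hLHS : ∑ m ∈ Finset.Icc a (a + b - 1), r ^ (m - a) * Real.sin (m * θ / 2) ^ 2
        = (∑ k ∈ Finset.range b, r ^ k) / 2
          - (∑ k ∈ Finset.range b, r ^ k * Real.cos ((a + k) * θ)) / 2 := by
      rw [hIcc, Finset.sum_Ico_eq_sum_range]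
      have hab : a + b - a = b := by omega
      rw [hab, Finset.sum_div, Finset.sum_div, ← Finset.sum_sub_distrib]
      apply Finset.sum_congr rfl
      intro k _
      have h1 : a + k - a = k := by omega
      rw [h1, Real.sin_sq_eq_half_sub]
      have h2 : 2 * ((a + k : ℕ) * θ / 2) = ((a + k : ℕ) : ℝ) * θ := by ring
      rw [h2]
      push_cast
      ring
    rw [hLHS, if_neg hden, hG]
    linarith [hC]
end

section
/- For every integer n ≥ 1 with n ≡ 1 mod 3 or general n ≥ 1, the saddle point equation Σ_{k=2}^{n-1} k(2r^{2k} + r^k)/(1 + r^k + r^{2k}) = m has a unique positive real solution r for each real m with 0 < m < n² - n - 2; moreover, if n ≤ m ≤ (n² - n - 2)/2, then the solution satisfies e^{-√(α/n)} < r ≤ 1, where α = 2/√3. -/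
open Real Finset

noncomputable def sp (n : ℕ) (r : ℝ) : ℝ :=
  ∑ k ∈ Finset.Icc 2 (n - 1), (k : ℝ) * (2 * r ^ (2 * k) + r ^ k) / (1 + r ^ k + r ^ (2 * k))

lemma quad_pos (x : ℝ) : 0 < 1 + x + x ^ 2 := by nlinarith [sq_nonneg (x + 1), sq_nonneg x]

lemma denom_pos (k : ℕ) (x : ℝ) : 0 < 1 + x ^ k + x ^ (2 * k) := by
  have h : x ^ (2 * k) = (x ^ k) ^ 2 := by rw [pow_mul']
  rw [h]; exact quad_pos _

lemma term_eq (k : ℕ) (r : ℝ) :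
    (k : ℝ) * (2 * r ^ (2 * k) + r ^ k) / (1 + r ^ k + r ^ (2 * k))
      = (k : ℝ) * ((2 * (r ^ k) ^ 2 + r ^ k) / (1 + r ^ k + (r ^ k) ^ 2)) := by
  have h : r ^ (2 * k) = (r ^ k) ^ 2 := by rw [pow_mul']
  rw [h, mul_div_assoc]

lemma gmono {x y : ℝ} (hx : 0 ≤ x) (hxy : x < y) :
    (2 * x ^ 2 + x) / (1 + x + x ^ 2) < (2 * y ^ 2 + y) / (1 + y + y ^ 2) := by
  rw [div_lt_div_iff₀ (quad_pos x) (quad_pos y)]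
  nlinarith [mul_pos (sub_pos.2 hxy) (show (0:ℝ) < 2*x + 2*y + x*y + 1 by nlinarith)]

lemma sp_strictMonoOn {n : ℕ} (hn : 3 ≤ n) : StrictMonoOn (sp n) (Set.Ici 0) := by
  intro a ha b hb hab
  simp only [Set.mem_Ici] at ha hb
  apply Finset.sum_lt_sum_of_nonempty
  · rw [Finset.nonempty_Icc]; omega
  · intro k hk
    have hk2 : 2 ≤ k := (Finset.mem_Icc.1 hk).1
    rw [term_eq, term_eq]
    have hkpos : (0:ℝ) < k := by positivity
    apply mul_lt_mul_of_pos_left _ hkpos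
    exact gmono (pow_nonneg ha k) (pow_lt_pow_left₀ hab ha (by omega))

lemma sp_cont (n : ℕ) : Continuous (sp n) := by
  apply continuous_finset_sum
  intro k _
  exact Continuous.div (by continuity) (by continuity) (fun x => (denom_pos k x).ne')

lemma sp_zero (n : ℕ) : sp n 0 = 0 := by
  apply Finset.sum_eq_zero
  intro k hk
  have hk2 : 2 ≤ k := (Finset.mem_Icc.1 hk).1
  rw [zero_pow (by omega : k ≠ 0), zero_pow (by omega : 2 * k ≠ 0)]
  norm_num

lemma sum_Icc_id {n : ℕ} (hn : 3 ≤ n) :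
    ∑ k ∈ Finset.Icc 2 (n - 1), (k : ℝ) = ((n : ℝ) ^ 2 - n - 2) / 2 := by
  induction n with
  | zero => omega
  | succ p ih =>
    rcases Nat.lt_or_ge p 3 with hp | hp
    · have hp2 : p = 2 := by omega
      subst hp2
      norm_num [Finset.Icc_self]
    · have h1 : p + 1 - 1 = p := rfl
      rw [h1]
      have h2 : p - 1 + 1 = p := by omega
      rw [← h2, Finset.sum_Icc_succ_top (by omega), h2, ih hp]
      have : ((p:ℕ) : ℝ) ≥ 0 := by positivity
      push_cast [h2]
      ring

lemma sp_one {n : ℕ} (hn : 3 ≤ n) : sp n 1 = ((n : ℝ) ^ 2 - n - 2) / 2 := by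
  rw [← sum_Icc_id hn]
  apply Finset.sum_congr rfl
  intro k _
  norm_num

lemma term_lower {k : ℕ} (hk : 2 ≤ k) {R : ℝ} (hR : 1 ≤ R) :
    2 * (k:ℝ) - 3 * k / R ^ 2 ≤ (k : ℝ) * (2 * R ^ (2 * k) + R ^ k) / (1 + R ^ k + R ^ (2 * k)) := by
  rw [term_eq]
  set x := R ^ k with hxdef
  have hR2 : (1:ℝ) ≤ R ^ 2 := by nlinarith
  have hR2p : (0:ℝ) < R ^ 2 := by linarith
  have hx2 : R ^ 2 ≤ x := pow_le_pow_right₀ hR hk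
  have hx1 : (1:ℝ) ≤ x := le_trans hR2 hx2
  have hd : (0:ℝ) < 1 + x + x ^ 2 := quad_pos x
  rw [← mul_div_assoc, le_div_iff₀ hd]
  set u := 3 * (k:ℝ) / R ^ 2 with hudef
  have hu0 : 0 ≤ u := by positivity
  have hu : u * R ^ 2 = 3 * k := by
    rw [hudef]; field_simp
  have hux : 3 * (k:ℝ) ≤ u * x := by
    calc (3:ℝ) * k = u * R ^ 2 := hu.symm
    _ ≤ u * x := by nlinarith
  have hux2 : 3 * (k:ℝ) * x ≤ u * x ^ 2 := by nlinarith
  have hk0 : (0:ℝ) ≤ k := by positivity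
  nlinarith [mul_le_mul_of_nonneg_left hx1 hk0]

lemma sp_large {n : ℕ} (hn : 3 ≤ n) (m : ℝ) (hm1 : m < (n : ℝ) ^ 2 - n - 2) :
    ∃ R : ℝ, 1 ≤ R ∧ m ≤ sp n R := by
  set D : ℝ := (n : ℝ) ^ 2 - n - 2 with hD
  have hD0 : 0 < D := by
    have : (3:ℝ) ≤ n := by exact_mod_cast hn
    nlinarith
  have hDm : 0 < D - m := by linarith
  set B : ℝ := 3 * D / (2 * (D - m)) with hB
  refine ⟨max 1 (Real.sqrt B), le_max_left _ _, ?_⟩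
  set R := max 1 (Real.sqrt B) with hRdef
  have hR1 : (1:ℝ) ≤ R := le_max_left _ _
  have hB0 : 0 < B := by positivity
  have hR2B : B ≤ R ^ 2 := by
    have h1 : Real.sqrt B ≤ R := le_max_right _ _
    have h2 : (Real.sqrt B) ^ 2 ≤ R ^ 2 :=
      pow_le_pow_left₀ (Real.sqrt_nonneg B) h1 2
    rwa [Real.sq_sqrt hB0.le] at h2
  have hR2p : (0:ℝ) < R ^ 2 := by nlinarith
  have hstep : ∀ k ∈ Finset.Icc 2 (n - 1),
      2 * (k:ℝ) - 3 * k / R ^ 2 ≤ (k : ℝ) * (2 * R ^ (2 * k) + R ^ k) / (1 + R ^ k + R ^ (2 * k)) :=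
    fun k hk => term_lower (Finset.mem_Icc.1 hk).1 hR1
  have hsum := Finset.sum_le_sum hstep
  have hsum2 : ∑ k ∈ Finset.Icc 2 (n - 1), (2 * (k:ℝ) - 3 * k / R ^ 2)
      = (2 - 3 / R ^ 2) * (D / 2) := by
    rw [show (2 - 3 / R ^ 2) * (D / 2) = (2 - 3 / R ^ 2) * ∑ k ∈ Finset.Icc 2 (n-1), (k:ℝ) by
      rw [sum_Icc_id hn]]
    rw [Finset.mul_sum]
    apply Finset.sum_congr rfl
    intro k _
    field_simp
  have hkey : m ≤ (2 - 3 / R ^ 2) * (D / 2) := by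
    have hBeq : B * (2 * (D - m)) = 3 * D := by
      rw [hB]; field_simp
    have h3 : 3 * D ≤ R ^ 2 * (2 * (D - m)) := by nlinarith
    have h4 : 3 * D / (2 * R ^ 2) ≤ D - m := by
      rw [div_le_iff₀ (by positivity)]; nlinarith
    have h5 : (2 - 3 / R ^ 2) * (D / 2) = D - 3 * D / (2 * R ^ 2) := by
      field_simp
    linarith
  calc m ≤ (2 - 3 / R ^ 2) * (D / 2) := hkey
    _ = ∑ k ∈ Finset.Icc 2 (n - 1), (2 * (k:ℝ) - 3 * k / R ^ 2) := hsum2.symm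
    _ ≤ sp n R := hsum

lemma alpha_bound (y : ℝ) (hy : 0 ≤ y) : 2 * y + 1 ≤ 2 / Real.sqrt 3 * (1 + y + y ^ 2) := by
  have hs : Real.sqrt 3 ^ 2 = 3 := Real.sq_sqrt (by norm_num)
  have hs0 : 0 < Real.sqrt 3 := Real.sqrt_pos.2 (by norm_num)
  rw [div_mul_eq_mul_div, le_div_iff₀ hs0]
  nlinarith [sq_nonneg (2 * y - (Real.sqrt 3 - 1))]

lemma exp_ineq {t : ℝ} (ht : 0 < t) : t ^ 2 * Real.exp (-t) < (1 - Real.exp (-t)) ^ 2 := by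
  set u := t / 2 with hu
  have hu0 : 0 < u := by positivity
  set a := Real.exp u with ha
  have ha0 : 0 < a := Real.exp_pos u
  have hsum : 1 + u + u ^ 2 / 2 ≤ a := by
    have h := Real.sum_le_exp_of_nonneg hu0.le 3
    simp [Finset.sum_range_succ, Nat.factorial] at h
    rw [ha]
    nlinarith [h]
  have hprod : Real.exp (-t) * (a * a) = 1 := by
    rw [ha, ← Real.exp_add, ← Real.exp_add]
    norm_num [hu]
  set e := Real.exp (-t) with he
  have he0 : 0 < e := Real.exp_pos _
  have h2 : (1 + u ^ 2 / 2) ^ 2 ≤ (a - u) ^ 2 :=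
    pow_le_pow_left₀ (by positivity) (by linarith) 2
  have f1 : 0 < a ^ 2 - 2 * u * a - 1 := by nlinarith [pow_pos hu0 4]
  have f2 : 0 < a ^ 2 + 2 * u * a - 1 := by nlinarith [mul_pos hu0 ha0]
  have key : 4 * u ^ 2 * a ^ 2 < (a ^ 2 - 1) ^ 2 := by nlinarith [mul_pos f1 f2]
  have e1 : (a ^ 2 - 1) ^ 2 * e ^ 2 = (1 - e) ^ 2 := by
    linear_combination (e * a ^ 2 + 1 - 2 * e) * hprod
  have e2 : 4 * u ^ 2 * a ^ 2 * e ^ 2 = 4 * u ^ 2 * e := by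
    linear_combination (4 * u ^ 2 * e) * hprod
  have keye : 4 * u ^ 2 * a ^ 2 * e ^ 2 < (a ^ 2 - 1) ^ 2 * e ^ 2 := by
    have := mul_lt_mul_of_pos_right key (show (0:ℝ) < e ^ 2 by positivity)
    linarith
  have ht4 : t ^ 2 * e = 4 * u ^ 2 * e := by rw [hu]; ring
  linarith

lemma sp_lt_n {n : ℕ} (hn : 3 ≤ n) :
    sp n (Real.exp (-Real.sqrt ((2 / Real.sqrt 3) / n))) < n := by
  have hs0 : 0 < Real.sqrt 3 := Real.sqrt_pos.2 (by norm_num)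
  set α : ℝ := 2 / Real.sqrt 3 with hα
  have hα0 : 0 < α := by positivity
  have hn0 : (0:ℝ) < n := by positivity
  set t := Real.sqrt (α / n) with htdef
  have ht0 : 0 < t := Real.sqrt_pos.2 (by positivity)
  have ht2 : t ^ 2 = α / n := Real.sq_sqrt (by positivity)
  set x := Real.exp (-t) with hx
  have hx0 : 0 < x := Real.exp_pos _
  have hx1 : x < 1 := by
    rw [hx, show (1:ℝ) = Real.exp 0 by simp]
    exact Real.exp_lt_exp.2 (by linarith)
  have step1 : sp n x ≤ α * ∑ k ∈ Finset.Icc 2 (n - 1), (k : ℝ) * x ^ k := by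
    rw [sp, Finset.mul_sum]
    apply Finset.sum_le_sum
    intro k _
    rw [term_eq]
    set y := x ^ k with hy
    have hy0 : (0:ℝ) ≤ y := by positivity
    have hb := alpha_bound y hy0
    rw [mul_div_assoc', div_le_iff₀ (quad_pos y)]
    nlinarith [mul_le_mul_of_nonneg_left hb (show (0:ℝ) ≤ (k:ℝ) * y by positivity)]
  have hnorm : ‖x‖ < 1 := by rw [Real.norm_eq_abs, abs_of_pos hx0]; exact hx1
  have hsummable : Summable (fun k : ℕ => (k : ℝ) * x ^ k) :=
    (hasSum_coe_mul_geometric_of_norm_lt_one hnorm).summable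
  have step2 : ∑ k ∈ Finset.Icc 2 (n - 1), (k : ℝ) * x ^ k ≤ x / (1 - x) ^ 2 := by
    have h := Summable.sum_le_tsum (Finset.Icc 2 (n - 1))
      (fun i _ => by positivity) hsummable
    rwa [tsum_coe_mul_geometric_of_norm_lt_one hnorm] at h
  have step3 : x / (1 - x) ^ 2 < 1 / t ^ 2 := by
    rw [div_lt_div_iff₀ (pow_pos (by linarith : (0:ℝ) < 1 - x) 2) (by positivity)]
    nlinarith [exp_ineq ht0]
  have hfin : α * (1 / t ^ 2) = n := by
    rw [ht2]; field_simp
  calc sp n x ≤ α * ∑ k ∈ Finset.Icc 2 (n - 1), (k : ℝ) * x ^ k := step1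
    _ ≤ α * (x / (1 - x) ^ 2) := by
        apply mul_le_mul_of_nonneg_left step2 hα0.le
    _ < α * (1 / t ^ 2) := by
        apply mul_lt_mul_of_pos_left step3 hα0
    _ = n := hfin

theorem stmt18 (n : ℕ) (hn : 1 ≤ n) (m : ℝ)
    (hm0 : 0 < m) (hm1 : m < (n : ℝ) ^ 2 - n - 2) :
    (∃! r : ℝ, 0 < r ∧
        ∑ k ∈ Finset.Icc 2 (n - 1),
            (k : ℝ) * (2 * r ^ (2 * k) + r ^ k) / (1 + r ^ k + r ^ (2 * k)) = m)
    ∧ ((n : ℝ) ≤ m → m ≤ ((n : ℝ) ^ 2 - n - 2) / 2 →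
        ∀ r : ℝ, 0 < r →
          (∑ k ∈ Finset.Icc 2 (n - 1),
              (k : ℝ) * (2 * r ^ (2 * k) + r ^ k) / (1 + r ^ k + r ^ (2 * k)) = m) →
          Real.exp (-Real.sqrt ((2 / Real.sqrt 3) / n)) < r ∧ r ≤ 1) := by
  have hn3 : 3 ≤ n := by
    by_contra h
    push_neg at h
    interval_cases n <;> norm_num at hm1 <;> linarith
  have hmono := sp_strictMonoOn hn3
  constructor
  · obtain ⟨R, hR1, hRm⟩ := sp_large hn3 m hm1
    have h0R : (0:ℝ) ≤ R := by linarith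
    obtain ⟨r, hrmem, hrm⟩ := intermediate_value_Icc h0R (sp_cont n).continuousOn
      ⟨by rw [sp_zero]; exact hm0.le, hRm⟩
    have hr0 : 0 < r := by
      rcases eq_or_lt_of_le hrmem.1 with h | h
      · exfalso
        rw [← h, sp_zero] at hrm
        linarith
      · exact h
    refine ⟨r, ⟨hr0, hrm⟩, ?_⟩
    rintro s ⟨hs0, hs⟩
    have hss : sp n s = sp n r := by
      show sp n s = sp n r
      rw [show sp n s = m from hs, show sp n r = m from hrm]
    exact hmono.injOn (Set.mem_Ici.2 hs0.le) (Set.mem_Ici.2 hr0.le) hss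
  · intro hmn hm2 r hr hsum
    have hsp : sp n r = m := hsum
    have hlt := sp_lt_n hn3
    constructor
    · by_contra h
      push_neg at h
      have h1 : sp n r ≤ sp n (Real.exp (-Real.sqrt ((2 / Real.sqrt 3) / n))) :=
        hmono.monotoneOn (Set.mem_Ici.2 hr.le) (Set.mem_Ici.2 (Real.exp_pos _).le) h
      rw [hsp] at h1
      linarith
    · by_contra h
      push_neg at h
      have h1 : sp n 1 < sp n r :=
        hmono (Set.mem_Ici.2 (by norm_num)) (Set.mem_Ici.2 hr.le) h
      rw [sp_one hn3, hsp] at h1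
      linarith
end

section
/- Let n ≥ 6924 be an integer, α = 2/√3, and r ∈ (exp(-√(α/n)), 1]. Then (1 - r^{n/12})(1 - r^{(n-12)/24}) / ((1-r)(1-r^n)) ≥ 24, where at r = 1 the left side is interpreted as its limit (n/12)·((n-12)/24)/n = (n-12)/288. -/
open Real

lemma lem_quad {x : ℝ} (hx : 0 ≤ x) : Real.exp (-x) ≤ 1 - x + x^2/2 := by
  have h := Real.quadratic_le_exp_of_nonneg hx
  have hE : (0:ℝ) < Real.exp x := Real.exp_pos x
  rw [Real.exp_neg, inv_le_iff_one_le_mul₀ hE]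
  nlinarith [sq_nonneg x, sq_nonneg (x^2)]

lemma lem_lin {x : ℝ} : 1 - Real.exp (-x) ≤ x := by
  nlinarith [Real.add_one_le_exp (-x)]

lemma lem_one_sub_nonneg {x : ℝ} (hx : 0 ≤ x) : 0 ≤ 1 - Real.exp (-x) := by
  have : Real.exp (-x) ≤ 1 := Real.exp_le_one_iff.mpr (by linarith)
  linarith

lemma lem_frac {x : ℝ} (hx : 0 ≤ x) : x/(1+x) ≤ 1 - Real.exp (-x) := by
  have h := Real.add_one_le_exp x
  have hE : (0:ℝ) < Real.exp x := Real.exp_pos x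
  have h1 : (0:ℝ) < 1 + x := by linarith
  rw [Real.exp_neg, div_le_iff₀ h1]
  have h2 : (Real.exp x)⁻¹ ≤ (1+x)⁻¹ := inv_anti₀ h1 (by linarith)
  have h3 : (1 - (1+x)⁻¹) * (1+x) ≤ (1 - (Real.exp x)⁻¹) * (1+x) := by
    apply mul_le_mul_of_nonneg_right _ h1.le
    linarith
  calc x = (1 - (1+x)⁻¹) * (1+x) := by field_simp; ring
  _ ≤ (1 - (Real.exp x)⁻¹) * (1+x) := h3

lemma lem_cubic {x : ℝ} (hx : 0 ≤ x) : 1 - x + x^2/2 - x^3/6 ≤ Real.exp (-x) := by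
  set f : ℝ → ℝ := fun y => Real.exp (-y) - (1 - y + y^2/2 - y^3/6) with hf
  have hd : ∀ y : ℝ, HasDerivAt f (-Real.exp (-y) + (1 - y + y^2/2)) y := by
    intro y
    have h1 : HasDerivAt (fun y : ℝ => Real.exp (-y)) (-Real.exp (-y)) y := by
      simpa [Function.comp_def] using (Real.hasDerivAt_exp (-y)).comp y (hasDerivAt_neg y)
    have h2 : HasDerivAt (fun y : ℝ => 1 - y + y^2/2 - y^3/6) (-1 + y - y^2/2) y := by
      have hid := hasDerivAt_id y
      exact ((((hasDerivAt_const y (1:ℝ)).sub hid).add ((hasDerivAt_pow 2 y).div_const 2)).sub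
        ((hasDerivAt_pow 3 y).div_const 6)).congr_deriv (by norm_num; ring)
    exact (h1.sub h2).congr_deriv (by ring)
  have hmono : MonotoneOn f (Set.Ici 0) := by
    apply monotoneOn_of_deriv_nonneg (convex_Ici 0)
    · exact Continuous.continuousOn (by continuity)
    · intro y hy
      exact (hd y).differentiableAt.differentiableWithinAt
    · intro y hy
      rw [(hd y).deriv]
      have hy0 : 0 ≤ y := le_of_lt (by simpa using hy)
      nlinarith [lem_quad hy0]
  have h0 : f 0 ≤ f x := hmono (by simp) (by simpa using hx) hx
  simp only [hf] at h0
  norm_num at h0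
  linarith

lemma poly1 (N t : ℝ) (hN : 6924 ≤ N) (ht : 0 < t) (h15 : t*N ≤ 6/5) :
    24*(t*(t*N - (t*N)^2/2 + (t*N)^3/6)) ≤
      (t*(N/12) - (t*(N/12))^2/2) * (t*((N-12)/24) - (t*((N-12)/24))^2/2) := by
  have hN0 : (0:ℝ) < N := by linarith
  have hq : (0:ℝ) ≤ 26640*N^2 - 127713024*N - 103680 := by nlinarith [mul_le_mul_of_nonneg_left hN hN0.le]
  have P1 : (0:ℝ) ≤ t^2*((6/5 - t*N)*(N*(N-6924))) := by
    apply mul_nonneg (sq_nonneg t)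
    apply mul_nonneg (by linarith) (mul_nonneg hN0.le (by linarith))
  have P2 : (0:ℝ) ≤ (t^2*(t*N))*(26640*N^2 - 127713024*N - 103680) := by
    apply mul_nonneg (mul_nonneg (sq_nonneg t) (mul_nonneg ht.le hN0.le)) hq
  have P3 : (0:ℝ) ≤ (t*(t*N)*(N-12))^2 := sq_nonneg _
  have P4 : (0:ℝ) ≤ t^2*(N*((t*N)*(6/5 - t*N))) := by
    apply mul_nonneg (sq_nonneg t)
    apply mul_nonneg hN0.le
    apply mul_nonneg (mul_nonneg ht.le hN0.le) (by linarith)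
  nlinarith [P1, P2, P3, P4]

lemma poly2 (N x : ℝ) (hN : 6924 ≤ N) (hx : 6/5 ≤ x) (hx2 : x^2 ≤ (2887/2500)*N) :
    6912*N + (864*N - 3456)*x + 24*(N-12)*x^2 ≤ N*(N-12)*x := by
  have hx0 : (0:ℝ) ≤ x := by linarith
  have h6924 : (0:ℝ) ≤ N*(N-6924) := mul_nonneg (by linarith) (by linarith)
  rcases le_total x 12 with h | h
  · have h1 : (0:ℝ) ≤ x*(12-x)*(N-12) :=
      mul_nonneg (mul_nonneg hx0 (by linarith)) (by linarith)
    have hq : (0:ℝ) ≤ N^2 - 1164*N + 6912 := by nlinarith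
    have h2 : (0:ℝ) ≤ (x - 6/5)*(N^2 - 1164*N + 6912) := mul_nonneg (by linarith) hq
    nlinarith [h1, h2, h6924]
  rcases le_total x 228 with h' | h'
  · have h1 : (0:ℝ) ≤ x*(228-x)*(N-12) :=
      mul_nonneg (mul_nonneg hx0 (by linarith)) (by linarith)
    have hq : (0:ℝ) ≤ N^2 - 6348*N + 69120 := by nlinarith
    have h2 : (0:ℝ) ≤ (x - 12)*(N^2 - 6348*N + 69120) := mul_nonneg (by linarith) hq
    nlinarith [h1, h2, h6924]
  · have h1 : (0:ℝ) ≤ (x - 228)*(N*(N-876) + 3456) := by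
      apply mul_nonneg (by linarith)
      nlinarith
    have h2 : (0:ℝ) ≤ ((2887/2500)*N - x^2)*(N-12) := mul_nonneg (by linarith) (by linarith)
    nlinarith [h1, h2, h6924]

set_option maxHeartbeats 1000000 in
theorem stmt19 (n : ℕ) (hn : 6924 ≤ n) (r : ℝ)
    (hr0 : Real.exp (-Real.sqrt ((2 / Real.sqrt 3) / n)) < r) (hr1 : r ≤ 1) :
    (if r = 1 then ((n : ℝ) - 12) / 288
      else (1 - r ^ ((n : ℝ) / 12)) * (1 - r ^ (((n : ℝ) - 12) / 24))
            / ((1 - r) * (1 - r ^ (n : ℝ))))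
      ≥ 24 := by
  have hN : (6924:ℝ) ≤ (n:ℝ) := by exact_mod_cast hn
  have hNpos : (0:ℝ) < (n:ℝ) := by linarith
  rcases eq_or_lt_of_le hr1 with heq | hlt
  · rw [if_pos heq]
    rw [ge_iff_le, le_div_iff₀ (by norm_num : (0:ℝ) < 288)]
    linarith
  · rw [if_neg (ne_of_lt hlt)]
    have hrpos : 0 < r := (Real.exp_pos _).trans hr0
    set t : ℝ := -Real.log r with htdef
    have ht : 0 < t := by
      have := Real.log_neg hrpos hlt
      simp only [htdef]; linarith
    have hrt : ∀ y : ℝ, r ^ y = Real.exp (-(t*y)) := by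
      intro y
      rw [Real.rpow_def_of_pos hrpos]
      congr 1
      simp only [htdef]; ring
    have hr1exp : r = Real.exp (-t) := by
      simp only [htdef, neg_neg]
      exact (Real.exp_log hrpos).symm
    clear_value t
    -- bound on t
    have hs : t < Real.sqrt ((2/Real.sqrt 3)/n) := by
      rw [hr1exp] at hr0
      have := Real.exp_lt_exp.mp hr0
      linarith
    have hsq : t^2 < (2/Real.sqrt 3)/n := by
      have h0 : (0:ℝ) ≤ (2/Real.sqrt 3)/n := by positivity
      nlinarith [Real.sq_sqrt h0, Real.sqrt_nonneg ((2/Real.sqrt 3)/(n:ℝ))]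
    have hsqrt3 : (1.732:ℝ) ≤ Real.sqrt 3 := by
      nlinarith [Real.sq_sqrt (by norm_num : (0:ℝ) ≤ 3), Real.sqrt_nonneg 3]
    have halpha : 2/Real.sqrt 3 ≤ 2887/2500 := by
      rw [div_le_iff₀ (by linarith)]
      nlinarith
    have ht2n : t^2 * n < 2/Real.sqrt 3 := (lt_div_iff₀ hNpos).mp hsq
    have hx2 : (t*(n:ℝ))^2 ≤ (2887/2500)*(n:ℝ) := by nlinarith
    -- denominator positive
    have hrn1 : r ^ ((n:ℝ)) < 1 := Real.rpow_lt_one hrpos.le hlt hNpos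
    have hD : 0 < (1-r)*(1-r^((n:ℝ))) := mul_pos (by linarith) (by linarith)
    rw [ge_iff_le, le_div_iff₀ hD]
    rw [hrt ((n:ℝ)/12), hrt (((n:ℝ)-12)/24), hrt ((n:ℝ)), hr1exp]
    -- abbreviations
    have hu0 : (0:ℝ) ≤ t*((n:ℝ)/12) := by positivity
    have hv0 : (0:ℝ) ≤ t*(((n:ℝ)-12)/24) := by
      apply mul_nonneg ht.le; linarith
    have hx0 : (0:ℝ) ≤ t*(n:ℝ) := by positivity
    have hT : 1 - Real.exp (-t) ≤ t := lem_lin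
    have hTnn : 0 ≤ 1 - Real.exp (-t) := lem_one_sub_nonneg ht.le
    have hXnn : 0 ≤ 1 - Real.exp (-(t*(n:ℝ))) := lem_one_sub_nonneg hx0
    have hUnn : 0 ≤ 1 - Real.exp (-(t*((n:ℝ)/12))) := lem_one_sub_nonneg hu0
    rcases le_total (t*(n:ℝ)) (6/5) with h15 | h15
    · -- small case
      have hA : t*((n:ℝ)/12) - (t*((n:ℝ)/12))^2/2 ≤ 1 - Real.exp (-(t*((n:ℝ)/12))) := by
        have := lem_quad hu0; linarith
      have hB : t*(((n:ℝ)-12)/24) - (t*(((n:ℝ)-12)/24))^2/2 ≤ 1 - Real.exp (-(t*(((n:ℝ)-12)/24))) := by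
        have := lem_quad hv0; linarith
      have hAl : (0:ℝ) ≤ t*((n:ℝ)/12) - (t*((n:ℝ)/12))^2/2 := by
        have h1 : t*((n:ℝ)/12) ≤ 1 := by linarith
        nlinarith [mul_nonneg hu0 (by linarith : (0:ℝ) ≤ 1 - t*((n:ℝ)/12)), sq_nonneg (t*((n:ℝ)/12))]
      have hBl : (0:ℝ) ≤ t*(((n:ℝ)-12)/24) - (t*(((n:ℝ)-12)/24))^2/2 := by
        have h1 : t*(((n:ℝ)-12)/24) ≤ 1 := by linarith
        nlinarith [mul_nonneg hv0 (by linarith : (0:ℝ) ≤ 1 - t*(((n:ℝ)-12)/24)), sq_nonneg (t*(((n:ℝ)-12)/24))]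
      have hX : 1 - Real.exp (-(t*(n:ℝ))) ≤ t*(n:ℝ) - (t*(n:ℝ))^2/2 + (t*(n:ℝ))^3/6 := by
        have := lem_cubic hx0; linarith
      have hprod1 : (1 - Real.exp (-t)) * (1 - Real.exp (-(t*(n:ℝ)))) ≤
          t * (t*(n:ℝ) - (t*(n:ℝ))^2/2 + (t*(n:ℝ))^3/6) :=
        mul_le_mul hT hX hXnn ht.le
      have hprod2 : (t*((n:ℝ)/12) - (t*((n:ℝ)/12))^2/2) * (t*(((n:ℝ)-12)/24) - (t*(((n:ℝ)-12)/24))^2/2) ≤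
          (1 - Real.exp (-(t*((n:ℝ)/12)))) * (1 - Real.exp (-(t*(((n:ℝ)-12)/24)))) :=
        mul_le_mul hA hB hBl hUnn
      have key := poly1 (n:ℝ) t hN ht h15
      linarith [hprod1, hprod2, key]
    · -- large case
      have hA : (t*((n:ℝ)/12))/(1 + t*((n:ℝ)/12)) ≤ 1 - Real.exp (-(t*((n:ℝ)/12))) := lem_frac hu0
      have hB : (t*(((n:ℝ)-12)/24))/(1 + t*(((n:ℝ)-12)/24)) ≤ 1 - Real.exp (-(t*(((n:ℝ)-12)/24))) :=
        lem_frac hv0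
      have hX : 1 - Real.exp (-(t*(n:ℝ))) ≤ 1 := by
        have := Real.exp_pos (-(t*(n:ℝ))); linarith
      have hprod1 : (1 - Real.exp (-t)) * (1 - Real.exp (-(t*(n:ℝ)))) ≤ t * 1 :=
        mul_le_mul hT hX hXnn ht.le
      have hfracA : (0:ℝ) ≤ (t*((n:ℝ)/12))/(1 + t*((n:ℝ)/12)) := by positivity
      have hfracB : (0:ℝ) ≤ (t*(((n:ℝ)-12)/24))/(1 + t*(((n:ℝ)-12)/24)) := by
        apply div_nonneg hv0; linarith
      have hprod2 : ((t*((n:ℝ)/12))/(1 + t*((n:ℝ)/12))) * ((t*(((n:ℝ)-12)/24))/(1 + t*(((n:ℝ)-12)/24))) ≤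
          (1 - Real.exp (-(t*((n:ℝ)/12)))) * (1 - Real.exp (-(t*(((n:ℝ)-12)/24)))) :=
        mul_le_mul hA hB hfracB hUnn
      have hmid : 24 * t ≤ ((t*((n:ℝ)/12))/(1 + t*((n:ℝ)/12))) * ((t*(((n:ℝ)-12)/24))/(1 + t*(((n:ℝ)-12)/24))) := by
        have hden : 0 < (1 + t*((n:ℝ)/12)) * (1 + t*(((n:ℝ)-12)/24)) :=
          mul_pos (by linarith [hu0]) (by linarith [hv0])
        rw [div_mul_div_comm, le_div_iff₀ hden]
        have key := poly2 (n:ℝ) (t*(n:ℝ)) hN h15 hx2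
        have h' : (0:ℝ) ≤ t * (((n:ℝ))*((n:ℝ)-12)*(t*(n:ℝ)) -
            (6912*(n:ℝ) + (864*(n:ℝ) - 3456)*(t*(n:ℝ)) + 24*((n:ℝ)-12)*(t*(n:ℝ))^2)) :=
          mul_nonneg ht.le (by linarith)
        have h2 : (24 * t * ((1 + t*((n:ℝ)/12)) * (1 + t*(((n:ℝ)-12)/24)))) * (n:ℝ) ≤
            (t*((n:ℝ)/12) * (t*(((n:ℝ)-12)/24))) * (n:ℝ) := by nlinarith [h']
        exact le_of_mul_le_mul_right h2 hNpos
      linarith [hprod1, hprod2, hmid]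
end
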